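/- arXiv:1003.1727 — 8 statements merged into one kernel-verified Lean document; each statement's English description precedes it below -/
import Mathlib

section
/- Let μ be a Borel probability measure on ℝ whose cdf G(x) = μ((−∞, x]) is continuous, and let λ ≠ 0. Define the measure ν by ν(A) = ∫_A (λ/(1 − e^{−λ})) e^{−λG(x)} dμ(x) for Borel sets A. Then ν is a probability measure and ν((−∞, x]) = F_λ(G(x)) for every x ∈ ℝ; that is, the exp-G measure μ_λ is absolutely continuous with respect to μ with Radon–Nikodym derivative dμ_λ/dμ (x) = λ e^{−λG(x)}/(1 − e^{−λ}). -/
open Real Set MeasureTheory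

lemma cdf_map_eq (μ : Measure ℝ) [IsProbabilityMeasure μ]
    (G : ℝ → ℝ) (hG : ∀ x, G x = (μ (Iic x)).toReal) (hGcont : Continuous G) :
    μ.map G = volume.restrict (Ioc 0 1) := by
  have hGe : G = ⇑(ProbabilityTheory.cdf μ) := by
    funext x; rw [hG, ProbabilityTheory.cdf_eq_real, measureReal_def]
  have hmono : Monotone G := hGe ▸ ProbabilityTheory.monotone_cdf μ
  have h0 : ∀ x, 0 ≤ G x := fun x => hGe ▸ ProbabilityTheory.cdf_nonneg μ x
  have h1 : ∀ x, G x ≤ 1 := fun x => hGe ▸ ProbabilityTheory.cdf_le_one μ x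
  have htop : Filter.Tendsto G Filter.atTop (nhds 1) := hGe ▸ ProbabilityTheory.tendsto_cdf_atTop μ
  have hbot : Filter.Tendsto G Filter.atBot (nhds 0) := hGe ▸ ProbabilityTheory.tendsto_cdf_atBot μ
  have hGm : Measurable G := hGcont.measurable
  have hIic : ∀ s : ℝ, μ (Iic s) = ENNReal.ofReal (G s) := by
    intro s; rw [hG, ENNReal.ofReal_toReal (measure_ne_top μ _)]
  refine Measure.ext_of_Iic _ _ (fun a => ?_)
  rw [Measure.map_apply hGm measurableSet_Iic, Measure.restrict_apply measurableSet_Iic]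
  rcases lt_or_ge a 0 with ha | ha
  · have hpre : G ⁻¹' Iic a = ∅ := by
      ext t; simp only [mem_preimage, mem_Iic, mem_empty_iff_false, iff_false, not_le]
      exact lt_of_lt_of_le ha (h0 t)
    have : Iic a ∩ Ioc (0:ℝ) 1 = ∅ := by
      ext t; simp only [mem_inter_iff, mem_Iic, mem_Ioc, mem_empty_iff_false, iff_false]
      rintro ⟨h1', h2', _⟩; linarith
    simp [hpre, this]
  rcases le_or_gt 1 a with ha1 | ha1
  · have hpre : G ⁻¹' Iic a = univ := by
      ext t; simp only [mem_preimage, mem_Iic, mem_univ, iff_true]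
      exact le_trans (h1 t) ha1
    have : Iic a ∩ Ioc (0:ℝ) 1 = Ioc 0 1 := by
      apply inter_eq_self_of_subset_right
      intro t ht; exact le_trans ht.2 ha1
    rw [hpre, this]
    simp [Real.volume_Ioc, measure_univ]
  · -- 0 ≤ a < 1
    have hrhs : Iic a ∩ Ioc (0:ℝ) 1 = Ioc 0 a := by
      ext t; simp only [mem_inter_iff, mem_Iic, mem_Ioc]
      constructor
      · rintro ⟨h', h0', _⟩; exact ⟨h0', h'⟩
      · rintro ⟨h0', h'⟩; exact ⟨h', h0', le_trans h' (le_of_lt ha1)⟩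
    rw [hrhs, Real.volume_Ioc, sub_zero]
    set S := G ⁻¹' Iic a with hS
    rcases eq_empty_or_nonempty S with hSe | hSne
    · -- S empty, need a = 0
      have : ¬ (0 < a) := by
        intro hapos
        obtain ⟨t, ht⟩ := (hbot.eventually_le_const hapos).exists
        have htS : t ∈ S := ht
        rw [hSe] at htS
        exact htS
      have ha0 : a = 0 := le_antisymm (not_lt.mp this) ha
      simp [hSe, ha0]
    · have hclosed : IsClosed S := IsClosed.preimage hGcont isClosed_Iic
      have hbdd : BddAbove S := by
        obtain ⟨t0, ht0⟩ := (htop.eventually_const_lt ha1).exists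
        refine ⟨t0, fun s hs => ?_⟩
        by_contra hst
        push_neg at hst
        exact absurd (le_trans (hmono hst.le) hs) (not_le.mpr ht0)
      set s := sSup S with hs
      have hsS : s ∈ S := hclosed.csSup_mem hSne hbdd
      have hSeq : S = Iic s := by
        apply Subset.antisymm
        · exact fun t ht => le_csSup hbdd ht
        · exact fun t ht => le_trans (hmono ht) hsS
      have hGsa : G s = a := by
        refine le_antisymm hsS ?_
        have htend : Filter.Tendsto (fun n : ℕ => G (s + 1/(n+1))) Filter.atTop (nhds (G s)) := by
          refine (hGcont.tendsto s).comp ?_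
          have : Filter.Tendsto (fun n : ℕ => s + 1/(n+1)) Filter.atTop (nhds (s + 0)) :=
            tendsto_const_nhds.add tendsto_one_div_add_atTop_nhds_zero_nat
          simpa using this
        refine ge_of_tendsto htend (Filter.Eventually.of_forall fun n => ?_)
        by_contra hlt
        push_neg at hlt
        have hmem : s + 1/(n+1) ∈ S := le_of_lt hlt
        rw [hSeq, mem_Iic] at hmem
        have hpos : (0:ℝ) < 1/(n+1) := by positivity
        linarith
      rw [hSeq, hIic, hGsa]

/-- If `μ` is a Borel probability measure on `ℝ` with continuous cdf `G`
and `λ ≠ 0`, then the measure `ν` with density `x ↦ (λ/(1 − e^{−λ})) e^{−λG(x)}`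
with respect to `μ` is a probability measure whose cdf is `x ↦ F_λ(G(x))`;
that is, the exp-G measure `μ_λ` satisfies `dμ_λ/dμ (x) = λ e^{−λG(x)}/(1 − e^{−λ})`. -/
theorem expG_withDensity_isProbability_and_cdf
    (μ : Measure ℝ) [IsProbabilityMeasure μ]
    (G : ℝ → ℝ) (hG : ∀ x, G x = (μ (Iic x)).toReal) (hGcont : Continuous G)
    (l : ℝ) (hl : l ≠ 0)
    (ν : Measure ℝ)
    (hν : ν = μ.withDensity
      (fun x => ENNReal.ofReal (l / (1 - Real.exp (-l)) * Real.exp (-(l * G x))))) :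
    IsProbabilityMeasure ν ∧
    ∀ x : ℝ, (ν (Iic x)).toReal
      = (1 - Real.exp (-(l * G x))) / (1 - Real.exp (-l)) := by
  have hGm : Measurable G := hGcont.measurable
  have hmap := cdf_map_eq μ G hG hGcont
  have hmono : Monotone G := by
    intro a b hab
    rw [hG a, hG b]
    exact ENNReal.toReal_mono (measure_ne_top μ _) (measure_mono (Iic_subset_Iic.mpr hab))
  set c := l / (1 - Real.exp (-l)) with hc
  have hne : (1:ℝ) - Real.exp (-l) ≠ 0 := by
    intro h
    have : Real.exp (-l) = 1 := by linarith
    have : -l = (0:ℝ) := by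
      have h0 : Real.exp (-l) = Real.exp 0 := by rw [this, Real.exp_zero]
      exact Real.exp_eq_exp.mp h0
    exact hl (neg_eq_zero.mp this)
  have hcpos : 0 < c := by
    rcases hl.lt_or_gt with h | h
    · apply div_pos_of_neg_of_neg h
      have : (1:ℝ) < Real.exp (-l) := by
        rw [← Real.exp_zero]; exact Real.exp_lt_exp.mpr (by linarith)
      linarith
    · apply div_pos h
      have : Real.exp (-l) < 1 := by
        rw [← Real.exp_zero]; exact Real.exp_lt_exp.mpr (by linarith)
      linarith
  have hfnn : ∀ u : ℝ, 0 ≤ u → 0 ≤ (1 - Real.exp (-(l*u)))/l := by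
    intro u hu
    rcases hl.lt_or_gt with h | h
    · refine div_nonneg_iff.mpr (Or.inr ⟨?_, h.le⟩)
      have : (1:ℝ) ≤ Real.exp (-(l*u)) := by
        nth_rewrite 1 [← Real.exp_zero]; exact Real.exp_le_exp.mpr (by nlinarith)
      linarith
    · apply div_nonneg _ h.le
      have : Real.exp (-(l*u)) ≤ 1 := by
        rw [← Real.exp_zero]; exact Real.exp_le_exp.mpr (by nlinarith)
      linarith
  have hint : ∀ u : ℝ, ∫ v in (0:ℝ)..u, c * Real.exp (-(l*v))
      = c * ((1 - Real.exp (-(l*u)))/l) := by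
    intro u
    have hderiv : ∀ v : ℝ, HasDerivAt (fun w => (-1/l) * Real.exp (-(l*w)))
        (Real.exp (-(l*v))) v := by
      intro v
      have h1 : HasDerivAt (fun w : ℝ => -(l*w)) (-l) v := by
        exact (((hasDerivAt_id' v).const_mul l).neg).congr_deriv (by ring)
      have h2 := (h1.exp).const_mul (-1/l)
      refine h2.congr_deriv ?_
      field_simp
    have hJ : ∫ v in (0:ℝ)..u, Real.exp (-(l*v)) = (1 - Real.exp (-(l*u)))/l := by
      rw [intervalIntegral.integral_eq_sub_of_hasDerivAt (fun v _ => hderiv v)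
        ((((continuous_const.mul continuous_id).neg).rexp).intervalIntegrable 0 u)]
      simp only [mul_zero, neg_zero, Real.exp_zero]
      field_simp
      ring
    rw [intervalIntegral.integral_const_mul, hJ]
  have hlintIoc : ∀ u : ℝ, 0 ≤ u →
      ∫⁻ v in Ioc (0:ℝ) u, ENNReal.ofReal (c * Real.exp (-(l*v)))
        = ENNReal.ofReal (c * ((1 - Real.exp (-(l*u)))/l)) := by
    intro u hu
    rw [← hint u, intervalIntegral.integral_of_le hu,
      ← ofReal_integral_eq_lintegral_ofReal]
    · exact (continuous_const.mul (((continuous_const.mul continuous_id).neg).rexp)).integrableOn_Ioc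
    · exact Filter.Eventually.of_forall fun v => by positivity
  have hgm : Measurable (fun u : ℝ => ENNReal.ofReal (c * Real.exp (-(l*u)))) :=
    ENNReal.measurable_ofReal.comp
      (continuous_const.mul (((continuous_const.mul continuous_id).neg).rexp)).measurable
  have hG01 : ∀ x, 0 ≤ G x ∧ G x ≤ 1 := by
    intro x
    constructor
    · rw [hG]; exact ENNReal.toReal_nonneg
    · rw [hG]
      have : μ (Iic x) ≤ 1 := prob_le_one
      have := ENNReal.toReal_mono ENNReal.one_ne_top this
      simpa using this
  have hIicmap : ∀ u : ℝ, 0 ≤ u → u ≤ 1 → μ.map G (Iic u) = ENNReal.ofReal u := by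
    intro u h0 h1
    rw [hmap, Measure.restrict_apply measurableSet_Iic]
    have : Iic u ∩ Ioc (0:ℝ) 1 = Ioc 0 u := by
      ext t; simp only [mem_inter_iff, mem_Iic, mem_Ioc]
      exact ⟨fun ⟨h', h0', _⟩ => ⟨h0', h'⟩, fun ⟨h0', h'⟩ => ⟨h', h0', le_trans h' h1⟩⟩
    rw [this, Real.volume_Ioc, sub_zero]
  have hcdf : ∀ x : ℝ, ν (Iic x)
      = ENNReal.ofReal (c * ((1 - Real.exp (-(l * G x)))/l)) := by
    intro x
    obtain ⟨hx0, hx1⟩ := hG01 x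
    rw [hν, withDensity_apply _ measurableSet_Iic]
    set S := G ⁻¹' Iic (G x) with hSdef
    have hsub : Iic x ⊆ S := fun t ht => hmono ht
    have hSmeas : μ S = ENNReal.ofReal (G x) := by
      rw [← Measure.map_apply hGm measurableSet_Iic]
      exact hIicmap _ hx0 hx1
    have hIicx : μ (Iic x) = ENNReal.ofReal (G x) := by
      rw [hG, ENNReal.ofReal_toReal (measure_ne_top μ _)]
    have hnull : μ (S \ Iic x) = 0 := by
      rw [measure_diff hsub measurableSet_Iic.nullMeasurableSet (measure_ne_top μ _),
        hSmeas, hIicx, tsub_self]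
    have hae : Iic x =ᵐ[μ] S := by
      rw [MeasureTheory.ae_eq_set]
      exact ⟨by rw [diff_eq_empty.mpr hsub]; simp, hnull⟩
    rw [setLIntegral_congr hae]
    have : ∫⁻ t in S, ENNReal.ofReal (c * Real.exp (-(l * G t))) ∂μ
        = ∫⁻ u in Iic (G x), ENNReal.ofReal (c * Real.exp (-(l * u))) ∂(μ.map G) := by
      rw [setLIntegral_map measurableSet_Iic hgm hGm]
    rw [this, hmap, Measure.restrict_restrict measurableSet_Iic]
    have hI : Iic (G x) ∩ Ioc (0:ℝ) 1 = Ioc 0 (G x) := by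
      ext t; simp only [mem_inter_iff, mem_Iic, mem_Ioc]
      exact ⟨fun ⟨h', h0', _⟩ => ⟨h0', h'⟩, fun ⟨h0', h'⟩ => ⟨h', h0', le_trans h' hx1⟩⟩
    rw [hI]
    exact hlintIoc _ hx0
  constructor
  · constructor
    rw [hν, withDensity_apply _ MeasurableSet.univ, Measure.restrict_univ]
    have : ∫⁻ t, ENNReal.ofReal (c * Real.exp (-(l * G t))) ∂μ
        = ∫⁻ u, ENNReal.ofReal (c * Real.exp (-(l * u))) ∂(μ.map G) := by
      rw [lintegral_map hgm hGm]
    rw [this, hmap]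
    have := hlintIoc 1 zero_le_one
    rw [mul_one] at this
    rw [this]
    have : c * ((1 - Real.exp (-l))/l) = 1 := by
      rw [hc]; field_simp
    rw [this, ENNReal.ofReal_one]
  · intro x
    rw [hcdf x, ENNReal.toReal_ofReal (by
      exact mul_nonneg hcpos.le (hfnn _ (hG01 x).1))]
    rw [hc]
    field_simp
end

section
/- Let μ be any Borel probability measure on ℝ with cdf G, let λ ≠ 0, and let μ_λ be the unique Borel probability measure with cdf x ↦ F_λ(G(x)). Then for every Borel set A, m_λ · μ(A) ≤ μ_λ(A) ≤ M_λ · μ(A), where m_λ = min(λ/(1 − e^{−λ}), λ/(e^λ − 1)) and M_λ = max(λ/(1 − e^{−λ}), λ/(e^λ − 1)). In particular μ_λ and μ are mutually absolutely continuous, so μ and μ_λ have the same null sets (and hence the same support). -/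
open Real Set MeasureTheory

/-- Positivity of `l / (1 - exp (-l))` for `l ≠ 0`. -/
lemma expG_c_pos {l : ℝ} (hl : l ≠ 0) : 0 < l / (1 - Real.exp (-l)) := by
  rcases hl.lt_or_gt with h | h
  · have h1 : 1 < Real.exp (-l) := Real.one_lt_exp_iff.2 (by linarith)
    exact div_pos_of_neg_of_neg h (by linarith)
  · have h1 : Real.exp (-l) < 1 := Real.exp_lt_one_iff.2 (by linarith)
    exact div_pos h (by linarith)

lemma expG_d_ne {l : ℝ} (hl : l ≠ 0) : (1 - Real.exp (-l)) ≠ 0 := by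
  rcases hl.lt_or_gt with h | h
  · have h1 : 1 < Real.exp (-l) := Real.one_lt_exp_iff.2 (by linarith)
    exact by linarith
  · have h1 : Real.exp (-l) < 1 := Real.exp_lt_one_iff.2 (by linarith)
    exact by linarith

lemma expG_alt {l : ℝ} (hl : l ≠ 0) :
    l / (Real.exp l - 1) = (l / (1 - Real.exp (-l))) * Real.exp (-l) := by
  have hd := expG_d_ne hl
  have he : Real.exp l - 1 ≠ 0 := by
    intro h
    have : Real.exp l = 1 := by linarith
    exact hl (by simpa [Real.exp_eq_one_iff] using this)
  have hmul : Real.exp l * Real.exp (-l) = 1 := by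
    rw [← Real.exp_add]; simp
  rw [div_mul_eq_mul_div, div_eq_div_iff he hd]
  linear_combination (-l) * hmul

/-- derivative of the truncated exponential cdf -/
lemma expG_hasDerivAt {l : ℝ} (hl : l ≠ 0) (u : ℝ) :
    HasDerivAt (fun u => (1 - Real.exp (-(l*u))) / (1 - Real.exp (-l)))
      ((l / (1 - Real.exp (-l))) * Real.exp (-(l*u))) u := by
  have h1 : HasDerivAt (fun u : ℝ => -(l*u)) (-l) u := by
    simpa using ((hasDerivAt_id u).const_mul l).fun_neg
  have h2 : HasDerivAt (fun u : ℝ => Real.exp (-(l*u))) (Real.exp (-(l*u)) * (-l)) u :=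
    h1.exp
  have h3 : HasDerivAt (fun u : ℝ => 1 - Real.exp (-(l*u))) (l * Real.exp (-(l*u))) u := by
    simpa [mul_comm] using h2.const_sub 1
  have h4 := h3.div_const (1 - Real.exp (-l))
  rw [div_mul_eq_mul_div]
  exact h4

/-- key increment bounds for the truncated exponential cdf -/
lemma expG_key {l : ℝ} (hl : l ≠ 0) {u v : ℝ} (h0 : 0 ≤ v) (hvu : v ≤ u) (h1 : u ≤ 1) :
    min (l / (1 - Real.exp (-l))) ((l / (1 - Real.exp (-l))) * Real.exp (-l)) * (u - v)
      ≤ (1 - Real.exp (-(l*u))) / (1 - Real.exp (-l))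
        - (1 - Real.exp (-(l*v))) / (1 - Real.exp (-l)) ∧
    (1 - Real.exp (-(l*u))) / (1 - Real.exp (-l))
        - (1 - Real.exp (-(l*v))) / (1 - Real.exp (-l))
      ≤ max (l / (1 - Real.exp (-l))) ((l / (1 - Real.exp (-l))) * Real.exp (-l)) * (u - v) := by
  set c := l / (1 - Real.exp (-l)) with hc_def
  have hc : 0 < c := expG_c_pos hl
  set F : ℝ → ℝ := fun u => (1 - Real.exp (-(l*u))) / (1 - Real.exp (-l)) with hF_def
  -- bounds on the derivative
  have hder : ∀ x ∈ Set.Icc (0:ℝ) 1,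
      min c (c * Real.exp (-l)) ≤ c * Real.exp (-(l*x)) ∧
      c * Real.exp (-(l*x)) ≤ max c (c * Real.exp (-l)) := by
    intro x hx
    obtain ⟨hx0, hx1⟩ := hx
    have hub : -(l*x) ≤ max 0 (-l) := by
      rcases le_or_gt 0 l with h | h
      · have : 0 ≤ l * x := mul_nonneg h hx0
        exact le_trans (by linarith) (le_max_left _ _)
      · have : -(l*x) ≤ -l := by nlinarith
        exact le_trans this (le_max_right _ _)
    have hlb : min 0 (-l) ≤ -(l*x) := by
      rcases le_or_gt 0 l with h | h
      · have : -(l*x) ≥ -l := by nlinarith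
        exact le_trans (min_le_right _ _) this
      · have : 0 ≤ -(l*x) := by nlinarith
        exact le_trans (min_le_left _ _) this
    have hexp_ub : Real.exp (-(l*x)) ≤ max 1 (Real.exp (-l)) := by
      have := Real.exp_le_exp.2 hub
      rwa [Real.exp_monotone.map_max, Real.exp_zero] at this
    have hexp_lb : min 1 (Real.exp (-l)) ≤ Real.exp (-(l*x)) := by
      have := Real.exp_le_exp.2 hlb
      rwa [Real.exp_monotone.map_min, Real.exp_zero] at this
    constructor
    · calc min c (c * Real.exp (-l)) = c * min 1 (Real.exp (-l)) := by
            rw [mul_min_of_nonneg _ _ hc.le, mul_one]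
        _ ≤ c * Real.exp (-(l*x)) := by
            exact mul_le_mul_of_nonneg_left hexp_lb hc.le
    · calc c * Real.exp (-(l*x)) ≤ c * max 1 (Real.exp (-l)) :=
            mul_le_mul_of_nonneg_left hexp_ub hc.le
        _ = max c (c * Real.exp (-l)) := by
            rw [mul_max_of_nonneg _ _ hc.le, mul_one]
  have hcont : Continuous F :=
    (continuous_const.sub (Real.continuous_exp.comp (by continuity))).div_const _
  set m := min c (c * Real.exp (-l)) with hm_def
  set M := max c (c * Real.exp (-l)) with hM_def
  -- upper: M*u - F u monotone on Icc 0 1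
  have hDU : ∀ x : ℝ, HasDerivAt (fun x => M * x - F x) (M - c * Real.exp (-(l*x))) x := by
    intro x
    simpa using ((hasDerivAt_id x).const_mul M).fun_sub (expG_hasDerivAt hl x)
  have hup : MonotoneOn (fun x => M * x - F x) (Set.Icc (0:ℝ) 1) := by
    apply monotoneOn_of_deriv_nonneg (convex_Icc 0 1)
    · exact ((continuous_const.mul continuous_id).sub hcont).continuousOn
    · intro x _
      exact (hDU x).differentiableAt.differentiableWithinAt
    · intro x hx
      rw [interior_Icc] at hx
      rw [(hDU x).deriv]
      have := (hder x ⟨hx.1.le, hx.2.le⟩).2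
      linarith
  have hDL : ∀ x : ℝ, HasDerivAt (fun x => F x - m * x) (c * Real.exp (-(l*x)) - m) x := by
    intro x
    simpa using (expG_hasDerivAt hl x).fun_sub ((hasDerivAt_id x).const_mul m)
  have hdown : MonotoneOn (fun x => F x - m * x) (Set.Icc (0:ℝ) 1) := by
    apply monotoneOn_of_deriv_nonneg (convex_Icc 0 1)
    · exact (hcont.sub (continuous_const.mul continuous_id)).continuousOn
    · intro x _
      exact (hDL x).differentiableAt.differentiableWithinAt
    · intro x hx
      rw [interior_Icc] at hx
      rw [(hDL x).deriv]
      have := (hder x ⟨hx.1.le, hx.2.le⟩).1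
      linarith
  have hv : v ∈ Set.Icc (0:ℝ) 1 := ⟨h0, le_trans hvu h1⟩
  have hu : u ∈ Set.Icc (0:ℝ) 1 := ⟨le_trans h0 hvu, h1⟩
  have H1 := hup hv hu hvu
  have H2 := hdown hv hu hvu
  simp only at H1 H2
  constructor
  · linarith
  · linarith

/-- Let `μ` be a Borel probability measure on `ℝ` with cdf `G`, `λ ≠ 0`,
and let `μ_λ` be the probability measure with cdf `x ↦ F_λ(G(x))`. Then for every Borel
set `A`, `m_λ · μ(A) ≤ μ_λ(A) ≤ M_λ · μ(A)` where
`m_λ = min(λ/(1 − e^{−λ}), λ/(e^λ − 1))` and `M_λ = max(λ/(1 − e^{−λ}), λ/(e^λ − 1))`;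
in particular `μ_λ` and `μ` are mutually absolutely continuous. -/
theorem expG_measure_equivalent
    (μ μl : Measure ℝ) [IsProbabilityMeasure μ] [IsProbabilityMeasure μl]
    (G : ℝ → ℝ) (hG : ∀ x, G x = (μ (Iic x)).toReal)
    (l : ℝ) (hl : l ≠ 0)
    (hμl : ∀ x, (μl (Iic x)).toReal
      = (1 - Real.exp (-(l * G x))) / (1 - Real.exp (-l))) :
    (∀ A : Set ℝ, MeasurableSet A →
      ENNReal.ofReal (min (l / (1 - Real.exp (-l))) (l / (Real.exp l - 1))) * μ A ≤ μl A ∧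
      μl A ≤ ENNReal.ofReal (max (l / (1 - Real.exp (-l))) (l / (Real.exp l - 1))) * μ A) ∧
    μl ≪ μ ∧ μ ≪ μl := by
  classical
  set c := l / (1 - Real.exp (-l)) with hc_def
  have hc : 0 < c := expG_c_pos hl
  have halt : l / (Real.exp l - 1) = c * Real.exp (-l) := expG_alt hl
  set m := min c (c * Real.exp (-l)) with hm_def
  set M := max c (c * Real.exp (-l)) with hM_def
  have hm_pos : 0 < m := lt_min hc (mul_pos hc (Real.exp_pos _))
  have hM_pos : 0 < M := lt_of_lt_of_le hm_pos (min_le_max)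
  set Gm := ProbabilityTheory.cdf μ with hGm_def
  set Gl := ProbabilityTheory.cdf μl with hGl_def
  have hGx : ∀ x, G x = Gm x := fun x => by
    rw [hG x, ProbabilityTheory.cdf_eq_real, measureReal_def]
  have hGlx : ∀ x, Gl x = (1 - Real.exp (-(l * Gm x))) / (1 - Real.exp (-l)) := fun x => by
    rw [ProbabilityTheory.cdf_eq_real, measureReal_def, hμl x, hGx x]
  have hGm0 : ∀ x, 0 ≤ Gm x := ProbabilityTheory.cdf_nonneg μ
  have hGm1 : ∀ x, Gm x ≤ 1 := ProbabilityTheory.cdf_le_one μ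
  -- increments
  have hkey : ∀ x y, x ≤ y →
      m * (Gm y - Gm x) ≤ Gl y - Gl x ∧ Gl y - Gl x ≤ M * (Gm y - Gm x) := by
    intro x y hxy
    have h := expG_key hl (hGm0 x) (Gm.mono hxy) (hGm1 y)
    rw [hGlx x, hGlx y]
    exact h
  -- F 0 = 0 type bound: Gl x between m * Gm x and M * Gm x
  have hbd : ∀ x, m * Gm x ≤ Gl x ∧ Gl x ≤ M * Gm x := by
    intro x
    have h := expG_key hl (le_refl (0:ℝ)) (hGm0 x) (hGm1 x)
    rw [hGlx x]
    simp only [mul_zero, neg_zero, Real.exp_zero, sub_self, zero_div, sub_zero] at h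
    exact h
  -- Stieltjes function for upper bound
  set SU : StieltjesFunction ℝ :=
    { toFun := fun x => M * Gm x - Gl x
      mono' := fun x y hxy => by have := (hkey x y hxy).2; simp only; nlinarith
      right_continuous' := fun x =>
        (continuousWithinAt_const.mul (Gm.right_continuous x)).sub
          (Gl.right_continuous x) } with hSU_def
  have hSU_bot : Filter.Tendsto SU Filter.atBot (nhds 0) := by
    have : Filter.Tendsto (fun x => M * Gm x - Gl x) Filter.atBot (nhds (M * 0 - 0)) :=
      ((ProbabilityTheory.tendsto_cdf_atBot μ).const_mul M).sub
        (ProbabilityTheory.tendsto_cdf_atBot μl)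
    simpa using this
  have hSU_top : Filter.Tendsto SU Filter.atTop (nhds (M - 1)) := by
    have : Filter.Tendsto (fun x => M * Gm x - Gl x) Filter.atTop (nhds (M * 1 - 1)) :=
      ((ProbabilityTheory.tendsto_cdf_atTop μ).const_mul M).sub
        (ProbabilityTheory.tendsto_cdf_atTop μl)
    simpa using this
  haveI : IsFiniteMeasure SU.measure := SU.isFiniteMeasure hSU_bot hSU_top
  -- Stieltjes function for lower bound
  set TL : StieltjesFunction ℝ :=
    { toFun := fun x => Gl x - m * Gm x
      mono' := fun x y hxy => by have := (hkey x y hxy).1; simp only; nlinarith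
      right_continuous' := fun x =>
        (Gl.right_continuous x).sub
          (continuousWithinAt_const.mul (Gm.right_continuous x)) } with hTL_def
  have hTL_bot : Filter.Tendsto TL Filter.atBot (nhds 0) := by
    have : Filter.Tendsto (fun x => Gl x - m * Gm x) Filter.atBot (nhds (0 - m * 0)) :=
      (ProbabilityTheory.tendsto_cdf_atBot μl).sub
        ((ProbabilityTheory.tendsto_cdf_atBot μ).const_mul m)
    simpa using this
  have hTL_top : Filter.Tendsto TL Filter.atTop (nhds (1 - m)) := by
    have : Filter.Tendsto (fun x => Gl x - m * Gm x) Filter.atTop (nhds (1 - m * 1)) :=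
      (ProbabilityTheory.tendsto_cdf_atTop μl).sub
        ((ProbabilityTheory.tendsto_cdf_atTop μ).const_mul m)
    simpa using this
  haveI : IsFiniteMeasure TL.measure := TL.isFiniteMeasure hTL_bot hTL_top
  -- measure identities
  have hμIic : ∀ x, μ (Iic x) = ENNReal.ofReal (Gm x) := fun x =>
    (ProbabilityTheory.ofReal_cdf μ x).symm
  have hμlIic : ∀ x, μl (Iic x) = ENNReal.ofReal (Gl x) := fun x =>
    (ProbabilityTheory.ofReal_cdf μl x).symm
  have heqU : μl + SU.measure = ENNReal.ofReal M • μ := by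
    refine Measure.ext_of_Iic _ _ fun x => ?_
    rw [Measure.add_apply, SU.measure_Iic hSU_bot, Measure.smul_apply, smul_eq_mul,
      hμIic, hμlIic, sub_zero]
    have h1 : (SU : ℝ → ℝ) x = M * Gm x - Gl x := rfl
    rw [h1, ← ENNReal.ofReal_add (ProbabilityTheory.cdf_nonneg μl x)
      (by have := (hbd x).2; linarith), ← ENNReal.ofReal_mul hM_pos.le]
    rw [← hGl_def]
    ring_nf
  have heqL : ENNReal.ofReal m • μ + TL.measure = μl := by
    refine (Measure.ext_of_Iic μl _ fun x => ?_).symm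
    rw [Measure.add_apply, TL.measure_Iic hTL_bot, Measure.smul_apply, smul_eq_mul,
      hμIic, hμlIic, sub_zero]
    have h1 : (TL : ℝ → ℝ) x = Gl x - m * Gm x := rfl
    rw [h1, ← ENNReal.ofReal_mul hm_pos.le,
      ← ENNReal.ofReal_add (mul_nonneg hm_pos.le (hGm0 x)) (by have := (hbd x).1; linarith)]
    ring_nf
  -- bounds for all sets
  have hlow : ∀ A : Set ℝ, ENNReal.ofReal m * μ A ≤ μl A := by
    intro A
    calc ENNReal.ofReal m * μ A = (ENNReal.ofReal m • μ) A := by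
          rw [Measure.smul_apply, smul_eq_mul]
      _ ≤ (ENNReal.ofReal m • μ + TL.measure) A := by
          rw [Measure.add_apply]; exact le_self_add
      _ = μl A := by rw [heqL]
  have hhigh : ∀ A : Set ℝ, μl A ≤ ENNReal.ofReal M * μ A := by
    intro A
    calc μl A ≤ (μl + SU.measure) A := by
          rw [Measure.add_apply]; exact le_self_add
      _ = ENNReal.ofReal M * μ A := by
          rw [heqU, Measure.smul_apply, smul_eq_mul]
  refine ⟨fun A _ => ?_, ?_, ?_⟩
  · rw [halt]
    exact ⟨hlow A, hhigh A⟩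
  · refine Measure.AbsolutelyContinuous.mk fun s _ hs => ?_
    have := hhigh s
    rw [hs, mul_zero] at this
    exact le_antisymm this zero_le
  · refine Measure.AbsolutelyContinuous.mk fun s _ hs => ?_
    have := hlow s
    rw [hs] at this
    have h0 : ENNReal.ofReal m * μ s = 0 := le_antisymm this zero_le
    rcases mul_eq_zero.1 h0 with h | h
    · exact absurd h (by simp [ENNReal.ofReal_eq_zero, not_le, hm_pos])
    · exact h
end

section
/- Let μ be a Borel probability measure on ℝ whose cdf G is continuous, let λ ≠ 0, and let μ_λ be the exp-G measure, so that dμ_λ/dμ (x) = λ e^{−λG(x)}/(1 − e^{−λ}). Then the Kullback–Leibler divergence of μ_λ from μ is finite and depends only on λ: ∫ log(dμ_λ/dμ) dμ_λ = log(λ/(1 − e^{−λ})) + λ/(e^λ − 1) − 1. -/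
open Real Set MeasureTheory

open Filter Topology ProbabilityTheory
open scoped ENNReal NNReal

lemma key_measure_le (μ : Measure ℝ) [IsProbabilityMeasure μ]
    (G : ℝ → ℝ) (hG : ∀ x, G x = (μ (Iic x)).toReal) (hGcont : Continuous G) (t : ℝ) :
    μ {x | G x ≤ t} = ENNReal.ofReal (min t 1) := by
  have hGc : G = cdf μ := by
    funext x; rw [hG x, cdf_eq_real, measureReal_def]
  have hmono : Monotone G := hGc ▸ monotone_cdf μ
  have h0 : ∀ x, 0 ≤ G x := hGc ▸ cdf_nonneg μ
  have h1 : ∀ x, G x ≤ 1 := hGc ▸ cdf_le_one μ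
  have htop : Tendsto G atTop (𝓝 1) := hGc ▸ tendsto_cdf_atTop μ
  have hbot : Tendsto G atBot (𝓝 0) := hGc ▸ tendsto_cdf_atBot μ
  rcases lt_or_ge t 0 with ht | ht
  · have : {x | G x ≤ t} = (∅ : Set ℝ) := by
      ext x; simp only [mem_setOf_eq, mem_empty_iff_false, iff_false, not_le]
      exact lt_of_lt_of_le ht (h0 x)
    rw [this, measure_empty, min_eq_left (by linarith), ENNReal.ofReal_eq_zero.2 ht.le]
  rcases le_or_gt 1 t with ht1 | ht1
  · have : {x | G x ≤ t} = (univ : Set ℝ) := by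
      ext x; simp only [mem_setOf_eq, mem_univ, iff_true]
      exact (h1 x).trans ht1
    rw [this, measure_univ, min_eq_right ht1, ENNReal.ofReal_one]
  · rw [min_eq_left ht1.le]
    set S := {x | G x ≤ t} with hS
    obtain ⟨b, hb⟩ : ∃ b, t < G b := (htop.eventually (eventually_gt_nhds ht1)).exists
    have hbdd : BddAbove S := by
      refine ⟨b, fun x hx => ?_⟩
      by_contra hxb
      exact absurd ((hmono (le_of_not_ge hxb)).trans_lt' hb) (not_lt.2 hx)
    by_cases hne : S.Nonempty
    · have hclosed : IsClosed S := isClosed_le hGcont continuous_const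
      set a := sSup S with ha
      have haS : a ∈ S := hclosed.csSup_mem hne hbdd
      have hSa : S = Iic a := by
        ext x
        constructor
        · exact fun hx => le_csSup hbdd hx
        · exact fun hx => le_trans (hmono hx) haS
      have hGa : G a = t := by
        refine le_antisymm haS ?_
        by_contra hlt
        push_neg at hlt
        have hev : ∀ᶠ x in 𝓝 a, G x < t := (hGcont.tendsto a).eventually (gt_mem_nhds hlt)
        obtain ⟨x, hxlt, hxa⟩ := (hev.filter_mono nhdsWithin_le_nhds).and
          (eventually_mem_nhdsWithin (s := Ioi a)) |>.exists
        exact absurd (le_csSup hbdd hxlt.le) (not_le.2 hxa)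
      have : μ S = μ (Iic a) := by rw [hSa]
      rw [this, ← hGa, hGc, ofReal_cdf]
    · rw [not_nonempty_iff_eq_empty] at hne
      rw [hne, measure_empty]
      rcases eq_or_lt_of_le ht with rfl | ht'
      · simp
      · exfalso
        obtain ⟨x, hx⟩ := (hbot.eventually (eventually_lt_nhds ht')).exists
        exact (Set.eq_empty_iff_forall_notMem.1 hne x) hx.le

lemma map_eq_uniform (μ : Measure ℝ) [IsProbabilityMeasure μ]
    (G : ℝ → ℝ) (hG : ∀ x, G x = (μ (Iic x)).toReal) (hGcont : Continuous G) :
    μ.map G = volume.restrict (Icc 0 1) := by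
  have hprob : IsProbabilityMeasure (volume.restrict (Icc (0:ℝ) 1)) := by
    constructor
    rw [Measure.restrict_apply_univ, Real.volume_Icc]
    simp
  have hmap : IsProbabilityMeasure (μ.map G) :=
    Measure.isProbabilityMeasure_map hGcont.measurable.aemeasurable
  refine Measure.eq_of_cdf _ _ ?_
  ext t
  rw [cdf_eq_real, cdf_eq_real, measureReal_def, measureReal_def, Measure.map_apply hGcont.measurable measurableSet_Iic,
    Measure.restrict_apply measurableSet_Iic]
  have hset : Iic t ∩ Icc (0:ℝ) 1 = Icc 0 (min t 1) := by
    ext x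
    simp only [mem_inter_iff, mem_Iic, mem_Icc, le_min_iff]
    tauto
  have : G ⁻¹' Iic t = {x | G x ≤ t} := rfl
  rw [this, key_measure_le μ G hG hGcont, hset, Real.volume_Icc, sub_zero]

/-- Let `μ` be a Borel probability measure on `ℝ` with continuous cdf `G`,
`λ ≠ 0`, and let `μ_λ` be the exp-G measure, with `dμ_λ/dμ (x) = λ e^{−λG(x)}/(1 − e^{−λ})`.
Then the KL divergence of `μ_λ` from `μ` is finite and
`∫ log(dμ_λ/dμ) dμ_λ = log(λ/(1 − e^{−λ})) + λ/(e^λ − 1) − 1`. -/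
theorem expG_KL_divergence
    (μ : Measure ℝ) [IsProbabilityMeasure μ]
    (G : ℝ → ℝ) (hG : ∀ x, G x = (μ (Iic x)).toReal) (hGcont : Continuous G)
    (l : ℝ) (hl : l ≠ 0)
    (μl : Measure ℝ)
    (hμl : μl = μ.withDensity
      (fun x => ENNReal.ofReal (l / (1 - Real.exp (-l)) * Real.exp (-(l * G x))))) :
    Integrable (fun x => Real.log (l / (1 - Real.exp (-l)) * Real.exp (-(l * G x)))) μl ∧
    ∫ x, Real.log (l / (1 - Real.exp (-l)) * Real.exp (-(l * G x))) ∂μl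
      = Real.log (l / (1 - Real.exp (-l))) + l / (Real.exp l - 1) - 1 := by
  set c := l / (1 - Real.exp (-l)) with hc
  have hcpos : 0 < c := by
    rcases hl.lt_or_gt with h | h
    · exact div_pos_of_neg_of_neg h (by simp only [sub_neg]; exact Real.one_lt_exp_iff.mpr (by linarith))
    · exact div_pos h (by simp only [sub_pos]; exact Real.exp_lt_one_iff.mpr (by linarith))
  have hG0 : ∀ x, 0 ≤ G x := fun x => (hG x) ▸ ENNReal.toReal_nonneg
  have hG1 : ∀ x, G x ≤ 1 := fun x => by
    rw [hG x]
    calc (μ (Iic x)).toReal ≤ (1 : ℝ≥0∞).toReal :=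
      ENNReal.toReal_mono ENNReal.one_ne_top prob_le_one
    _ = 1 := by simp
  have hfun : (fun x => Real.log (c * Real.exp (-(l * G x))))
      = fun x => Real.log c - l * G x := by
    funext x
    rw [Real.log_mul hcpos.ne' (Real.exp_ne_zero _), Real.log_exp]
    ring
  have hfin : IsFiniteMeasure μl := by
    rw [hμl]
    refine isFiniteMeasure_withDensity ?_
    have hb : ∀ x, ENNReal.ofReal (c * Real.exp (-(l * G x)))
        ≤ ENNReal.ofReal (c * Real.exp |l|) := fun x => by
      apply ENNReal.ofReal_le_ofReal
      have : -(l * G x) ≤ |l| := by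
        have := abs_mul l (G x)
        have h2 : |l * G x| ≤ |l| := by
          rw [abs_mul]
          nlinarith [abs_nonneg l, abs_of_nonneg (hG0 x), hG1 x, hG0 x]
        linarith [neg_abs_le (l * G x)]
      exact mul_le_mul_of_nonneg_left (Real.exp_le_exp.mpr this) hcpos.le
    refine ne_top_of_le_ne_top (b := ENNReal.ofReal (c * Real.exp |l|))
      ENNReal.ofReal_ne_top (le_trans (lintegral_mono hb) (by simp))
  have hint : Integrable (fun x => Real.log c - l * G x) μl := by
    refine Integrable.mono' (integrable_const (|Real.log c| + |l|))
      ((continuous_const.sub (continuous_const.mul hGcont)).aestronglyMeasurable) ?_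
    filter_upwards with x
    rw [Real.norm_eq_abs]
    have h1 : |l * G x| ≤ |l| := by
      rw [abs_mul]
      nlinarith [abs_nonneg l, abs_of_nonneg (hG0 x), hG1 x, hG0 x]
    calc |Real.log c - l * G x| ≤ |Real.log c| + |l * G x| := abs_sub _ _
      _ ≤ |Real.log c| + |l| := by linarith
  refine ⟨hfun ▸ hint, ?_⟩
  rw [show (fun x => Real.log (c * Real.exp (-(l * G x)))) = fun x => Real.log c - l * G x
    from hfun]
  have hdens : (fun x => ENNReal.ofReal (c * Real.exp (-(l * G x))))
      = fun x => ((fun y => (c * Real.exp (-(l * G y))).toNNReal) x : ℝ≥0∞) := rfl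
  have hdmeas : Measurable (fun y => (c * Real.exp (-(l * G y))).toNNReal) :=
    (measurable_const.mul ((hGcont.measurable.const_mul l).neg.exp)).real_toNNReal
  rw [hμl, hdens, integral_withDensity_eq_integral_smul hdmeas]
  have hsmul : (fun x => ((c * Real.exp (-(l * G x))).toNNReal : ℝ≥0)
        • (Real.log c - l * G x))
      = fun x => (fun u => (c * Real.exp (-(l * u))) * (Real.log c - l * u)) (G x) := by
    funext x
    simp only [NNReal.smul_def, Real.coe_toNNReal _
      (mul_nonneg hcpos.le (Real.exp_nonneg _)), smul_eq_mul]
  rw [hsmul]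
  set h : ℝ → ℝ := fun u => (c * Real.exp (-(l * u))) * (Real.log c - l * u) with hh
  have hhcont : Continuous h :=
    (continuous_const.mul ((continuous_const.mul continuous_id).neg.rexp)).mul
      (continuous_const.sub (continuous_const.mul continuous_id))
  rw [← integral_map hGcont.measurable.aemeasurable hhcont.aestronglyMeasurable,
    map_eq_uniform μ G hG hGcont, integral_Icc_eq_integral_Ioc,
    ← intervalIntegral.integral_of_le zero_le_one]
  set H : ℝ → ℝ := fun u => Real.exp (-(l * u)) * (-(c / l) * Real.log c + c * u + c / l)
    with hH
  have hderiv : ∀ u ∈ uIcc (0:ℝ) 1, HasDerivAt H (h u) u := by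
    intro u _
    have h1 : HasDerivAt (fun y : ℝ => -(l * y)) (-l) u := by
      simpa using (((hasDerivAt_id u).const_mul l).fun_neg)
    have h2 : HasDerivAt (fun y => Real.exp (-(l * y))) (Real.exp (-(l * u)) * -l) u :=
      h1.exp
    have h3 : HasDerivAt (fun y => -(c / l) * Real.log c + c * y + c / l) c u := by
      simpa using ((((hasDerivAt_id u).const_mul c).const_add
        (-(c / l) * Real.log c)).add_const (c / l))
    have := h2.fun_mul h3
    refine this.congr_deriv ?_
    rw [hh]
    field_simp
    ring
  rw [intervalIntegral.integral_eq_sub_of_hasDerivAt hderiv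
    (hhcont.intervalIntegrable 0 1)]
  rw [hH]
  simp only [mul_one, mul_zero, neg_zero, Real.exp_zero, one_mul, add_zero]
  have hE0 : Real.exp l ≠ 0 := Real.exp_ne_zero l
  have hE1 : Real.exp l ≠ 1 := fun h' => hl (by rwa [Real.exp_eq_one_iff] at h')
  have hie : 1 - Real.exp (-l) ≠ 0 := by
    rw [Real.exp_neg]
    intro hcon
    apply hE1
    field_simp at hcon
    linarith
  have hEm1 : Real.exp l - 1 ≠ 0 := sub_ne_zero.mpr hE1
  rw [hc, Real.exp_neg]
  have hinv : (1 : ℝ) - (Real.exp l)⁻¹ ≠ 0 := by rwa [Real.exp_neg] at hie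
  field_simp
  ring
end

section
/- Let μ be a Borel probability measure on ℝ with cdf G, let λ ≠ 0, let μ_λ be the exp-G measure, and let r > 0. If ∫ |x|^r dμ(x) < ∞, then ∫ |x|^r dμ_λ(x) < ∞; moreover, for λ > 0, (λ/(e^λ − 1)) ∫ |x|^r dμ ≤ ∫ |x|^r dμ_λ ≤ (λ/(1 − e^{−λ})) ∫ |x|^r dμ, and for λ < 0 both inequalities are reversed. -/
open Real Set MeasureTheory Filter Topology

private lemma key_exp (a b : ℝ) : (b - a) * Real.exp a ≤ Real.exp b - Real.exp a := by
  have h := Real.add_one_le_exp (b - a)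
  have e : Real.exp b = Real.exp a * Real.exp (b - a) := by
    rw [← Real.exp_add]; ring_nf
  nlinarith [Real.exp_pos a]

private lemma exp_diff_bounds {l u v : ℝ} (hu : 0 ≤ u) (huv : u ≤ v) (hv : v ≤ 1) :
    l * (v - u) * Real.exp (-l) ≤ Real.exp (-(l*u)) - Real.exp (-(l*v)) ∧
    Real.exp (-(l*u)) - Real.exp (-(l*v)) ≤ l * (v - u) := by
  have h1 := key_exp (-(l*v)) (-(l*u))
  have h2 := key_exp (-(l*u)) (-(l*v))
  constructor
  · have hm : l * (v - u) * Real.exp (-l) ≤ l * (v - u) * Real.exp (-(l*v)) := by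
      rcases le_or_gt 0 l with hl | hl
      · have he : Real.exp (-l) ≤ Real.exp (-(l*v)) := Real.exp_le_exp.mpr (by nlinarith)
        have hs : 0 ≤ l * (v - u) := by nlinarith
        nlinarith
      · have he : Real.exp (-(l*v)) ≤ Real.exp (-l) := Real.exp_le_exp.mpr (by nlinarith)
        have hs : l * (v - u) ≤ 0 := by nlinarith
        nlinarith
    nlinarith [h1]
  · have hm : l * (v - u) * Real.exp (-(l*u)) ≤ l * (v - u) := by
      rcases le_or_gt 0 l with hl | hl
      · have he : Real.exp (-(l*u)) ≤ 1 := Real.exp_le_one_iff.mpr (by nlinarith)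
        have hs : 0 ≤ l * (v - u) := by nlinarith
        nlinarith
      · have he : (1:ℝ) ≤ Real.exp (-(l*u)) := Real.one_le_exp (by nlinarith)
        have hs : l * (v - u) ≤ 0 := by nlinarith
        nlinarith
    nlinarith [h2]

theorem expG_moments_finite_and_bounds
    (μ μl : Measure ℝ) [IsProbabilityMeasure μ] [IsProbabilityMeasure μl]
    (G : ℝ → ℝ) (hG : ∀ x, G x = (μ (Iic x)).toReal)
    (l : ℝ) (hl : l ≠ 0)
    (hμl : ∀ x, (μl (Iic x)).toReal
      = (1 - Real.exp (-(l * G x))) / (1 - Real.exp (-l)))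
    (r : ℝ) (hr : 0 < r)
    (hint : Integrable (fun x : ℝ => |x| ^ r) μ) :
    Integrable (fun x : ℝ => |x| ^ r) μl ∧
    (0 < l →
      l / (Real.exp l - 1) * ∫ x, |x| ^ r ∂μ ≤ ∫ x, |x| ^ r ∂μl ∧
      ∫ x, |x| ^ r ∂μl ≤ l / (1 - Real.exp (-l)) * ∫ x, |x| ^ r ∂μ) ∧
    (l < 0 →
      l / (1 - Real.exp (-l)) * ∫ x, |x| ^ r ∂μ ≤ ∫ x, |x| ^ r ∂μl ∧
      ∫ x, |x| ^ r ∂μl ≤ l / (Real.exp l - 1) * ∫ x, |x| ^ r ∂μ) := by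
  have hG0 : ∀ x, 0 ≤ G x := fun x => by rw [hG]; exact ENNReal.toReal_nonneg
  have hG1 : ∀ x, G x ≤ 1 := fun x => by
    rw [hG]
    calc (μ (Iic x)).toReal ≤ (μ univ).toReal :=
          ENNReal.toReal_mono (measure_ne_top _ _) (measure_mono (subset_univ _))
      _ = 1 := by simp
  set E : ℝ := 1 - Real.exp (-l) with hEdef
  have hEsign : (0 < l ∧ 0 < E) ∨ (l < 0 ∧ E < 0) := by
    rcases lt_or_gt_of_ne hl with h | h
    · right
      refine ⟨h, ?_⟩
      have h1 : (1:ℝ) < Real.exp (-l) := by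
        rw [← Real.exp_zero]; exact Real.exp_lt_exp.mpr (by linarith)
      rw [hEdef]; linarith
    · left
      refine ⟨h, ?_⟩
      have h1 : Real.exp (-l) < 1 := Real.exp_lt_one_iff.mpr (by linarith)
      rw [hEdef]; linarith
  have hEne : E ≠ 0 := by rcases hEsign with ⟨_, h⟩ | ⟨_, h⟩ <;> [exact h.ne'; exact h.ne]
  set c : ℝ := l * Real.exp (-l) / E with hcdef
  set C : ℝ := l / E with hCdef
  have hc : 0 < c := by
    rw [hcdef]
    rcases hEsign with ⟨h1, h2⟩ | ⟨h1, h2⟩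
    · exact div_pos (mul_pos h1 (Real.exp_pos _)) h2
    · exact div_pos_of_neg_of_neg (mul_neg_of_neg_of_pos h1 (Real.exp_pos _)) h2
  have hC : 0 < C := by
    rw [hCdef]
    rcases hEsign with ⟨h1, h2⟩ | ⟨h1, h2⟩
    · exact div_pos h1 h2
    · exact div_pos_of_neg_of_neg h1 h2
  have hnum : l * Real.exp (-l) ≤ l := by
    rcases lt_or_gt_of_ne hl with h | h
    · nlinarith [Real.one_le_exp (by linarith : (0:ℝ) ≤ -l)]
    · nlinarith [Real.exp_le_one_iff.mpr (by linarith : -l ≤ 0), Real.exp_pos (-l)]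
  set m : ℝ := min c C with hmdef
  set M : ℝ := max c C with hMdef
  have hm0 : 0 < m := lt_min hc hC
  have hM0 : 0 < M := lt_of_lt_of_le hc (le_max_left _ _)
  -- core bound
  have hDiv : ∀ u v : ℝ, 0 ≤ u → u ≤ v → v ≤ 1 →
      m * (v - u) ≤ (Real.exp (-(l*u)) - Real.exp (-(l*v))) / E ∧
      (Real.exp (-(l*u)) - Real.exp (-(l*v))) / E ≤ M * (v - u) := by
    intro u v hu huv hv
    obtain ⟨hlow, hup⟩ := exp_diff_bounds (l := l) hu huv hv
    have hvu : 0 ≤ v - u := by linarith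
    rcases hEsign with ⟨_, hE⟩ | ⟨_, hE⟩
    · constructor
      · calc m * (v - u) ≤ c * (v - u) := mul_le_mul_of_nonneg_right (min_le_left _ _) hvu
          _ = (l * (v - u) * Real.exp (-l)) / E := by rw [hcdef]; ring
          _ ≤ _ := (div_le_div_iff_of_pos_right hE).mpr hlow
      · calc (Real.exp (-(l*u)) - Real.exp (-(l*v))) / E
            ≤ (l * (v - u)) / E := (div_le_div_iff_of_pos_right hE).mpr hup
          _ = C * (v - u) := by rw [hCdef]; ring
          _ ≤ M * (v - u) := mul_le_mul_of_nonneg_right (le_max_right _ _) hvu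
    · constructor
      · calc m * (v - u) ≤ C * (v - u) := mul_le_mul_of_nonneg_right (min_le_right _ _) hvu
          _ = (l * (v - u)) / E := by rw [hCdef]; ring
          _ ≤ _ := (div_le_div_right_of_neg hE).mpr hup
      · calc (Real.exp (-(l*u)) - Real.exp (-(l*v))) / E
            ≤ (l * (v - u) * Real.exp (-l)) / E := (div_le_div_right_of_neg hE).mpr hlow
          _ = c * (v - u) := by rw [hcdef]; ring
          _ ≤ M * (v - u) := mul_le_mul_of_nonneg_right (le_max_left _ _) hvu
  -- cdf bounds (real)
  have hIicR : ∀ x : ℝ, m * G x ≤ (μl (Iic x)).toReal ∧ (μl (Iic x)).toReal ≤ M * G x := by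
    intro x
    have h := hDiv 0 (G x) le_rfl (hG0 x) (hG1 x)
    simp only [mul_zero, neg_zero, Real.exp_zero, sub_zero] at h
    rw [hμl x]
    exact h
  have hcompl : ∀ (ν : Measure ℝ) [IsProbabilityMeasure ν] (x : ℝ),
      (ν (Ioi x)).toReal = 1 - (ν (Iic x)).toReal := by
    intro ν _ x
    have hs : Ioi x = (Iic x)ᶜ := compl_Iic.symm
    rw [hs, measure_compl measurableSet_Iic (measure_ne_top _ _), measure_univ,
      ENNReal.toReal_sub_of_le prob_le_one ENNReal.one_ne_top, ENNReal.toReal_one]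
  have hIoiR : ∀ x : ℝ, m * (1 - G x) ≤ (μl (Ioi x)).toReal ∧
      (μl (Ioi x)).toReal ≤ M * (1 - G x) := by
    intro x
    have h := hDiv (G x) 1 (hG0 x) (hG1 x) le_rfl
    have hrw : (μl (Ioi x)).toReal
        = (Real.exp (-(l * G x)) - Real.exp (-(l * 1))) / E := by
      rw [hcompl μl x, hμl x]
      have h1 : (1:ℝ) - Real.exp (-l) ≠ 0 := hEdef ▸ hEne
      rw [hEdef]
      field_simp
      ring
    rw [hrw]
    exact h
  -- ENNReal conversions
  have hμIic : ∀ x : ℝ, μ (Iic x) = ENNReal.ofReal (G x) := fun x => by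
    rw [hG x, ENNReal.ofReal_toReal (measure_ne_top _ _)]
  have hIicE : ∀ x : ℝ, ENNReal.ofReal m * μ (Iic x) ≤ μl (Iic x) ∧
      μl (Iic x) ≤ ENNReal.ofReal M * μ (Iic x) := by
    intro x
    obtain ⟨h1, h2⟩ := hIicR x
    rw [hμIic x, ← ENNReal.ofReal_toReal (measure_ne_top μl (Iic x)),
      ← ENNReal.ofReal_mul hm0.le, ← ENNReal.ofReal_mul hM0.le]
    exact ⟨ENNReal.ofReal_le_ofReal h1, ENNReal.ofReal_le_ofReal h2⟩
  have hμIoi : ∀ x : ℝ, μ (Ioi x) = ENNReal.ofReal (1 - G x) := fun x => by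
    rw [← ENNReal.ofReal_toReal (measure_ne_top μ (Ioi x)), hcompl μ x, ← hG x]
  have hIoiE : ∀ x : ℝ, ENNReal.ofReal m * μ (Ioi x) ≤ μl (Ioi x) ∧
      μl (Ioi x) ≤ ENNReal.ofReal M * μ (Ioi x) := by
    intro x
    obtain ⟨h1, h2⟩ := hIoiR x
    rw [hμIoi x, ← ENNReal.ofReal_toReal (measure_ne_top μl (Ioi x)),
      ← ENNReal.ofReal_mul hm0.le, ← ENNReal.ofReal_mul hM0.le]
    exact ⟨ENNReal.ofReal_le_ofReal h1, ENNReal.ofReal_le_ofReal h2⟩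
  -- Iio bounds via limits
  have hseq : ∀ a : ℝ, Monotone (fun n : ℕ => Iic (a - 1/(n+1))) := by
    intro a n k hnk
    apply Iic_subset_Iic.mpr
    have hnk' : (n:ℝ) + 1 ≤ (k:ℝ) + 1 := by exact_mod_cast Nat.succ_le_succ hnk
    have h1 : (1:ℝ)/(k+1) ≤ 1/(n+1) := one_div_le_one_div_of_le (by positivity) hnk'
    linarith
  have hUnion : ∀ a : ℝ, (⋃ n : ℕ, Iic (a - 1/(n+1))) = Iio a := by
    intro a; ext y
    simp only [mem_iUnion, mem_Iic, mem_Iio]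
    constructor
    · rintro ⟨n, hn⟩
      have : (0:ℝ) < 1/(n+1) := by positivity
      linarith
    · intro hy
      obtain ⟨n, hn⟩ := exists_nat_one_div_lt (by linarith : (0:ℝ) < a - y)
      exact ⟨n, by linarith⟩
  have htend : ∀ (ν : Measure ℝ) (a : ℝ),
      Tendsto (fun n : ℕ => ν (Iic (a - 1/(n+1)))) atTop (𝓝 (ν (Iio a))) := by
    intro ν a
    have h2 := tendsto_measure_iUnion_atTop (μ := ν) (hseq a)
    rw [hUnion a] at h2
    exact h2
  have hIioE : ∀ a : ℝ, ENNReal.ofReal m * μ (Iio a) ≤ μl (Iio a) ∧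
      μl (Iio a) ≤ ENNReal.ofReal M * μ (Iio a) := by
    intro a
    constructor
    · exact le_of_tendsto_of_tendsto'
        (ENNReal.Tendsto.const_mul (htend μ a) (Or.inr ENNReal.ofReal_ne_top))
        (htend μl a) (fun n => (hIicE _).1)
    · exact le_of_tendsto_of_tendsto' (htend μl a)
        (ENNReal.Tendsto.const_mul (htend μ a) (Or.inr ENNReal.ofReal_ne_top))
        (fun n => (hIicE _).2)
  -- tail sets
  have hSt : ∀ t : ℝ, t ∈ Ioi (0:ℝ) →
      ENNReal.ofReal m * μ {x : ℝ | t < |x|} ≤ μl {x : ℝ | t < |x|} ∧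
      μl {x : ℝ | t < |x|} ≤ ENNReal.ofReal M * μ {x : ℝ | t < |x|} := by
    intro t ht
    have hset : {x : ℝ | t < |x|} = Iio (-t) ∪ Ioi t := by
      ext x
      simp only [mem_setOf_eq, mem_union, mem_Iio, mem_Ioi, lt_abs, lt_neg]
      tauto
    have hd : Disjoint (Iio (-t)) (Ioi t) := by
      rw [Set.disjoint_left]
      intro y h1 h2
      simp only [mem_Iio, mem_Ioi] at h1 h2
      have ht0 : (0:ℝ) < t := ht
      linarith
    have e1 : μ (Iio (-t) ∪ Ioi t) = μ (Iio (-t)) + μ (Ioi t) :=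
      measure_union hd measurableSet_Ioi
    have e2 : μl (Iio (-t) ∪ Ioi t) = μl (Iio (-t)) + μl (Ioi t) :=
      measure_union hd measurableSet_Ioi
    rw [hset, e1, e2, mul_add, mul_add]
    exact ⟨add_le_add (hIioE _).1 (hIoiE _).1, add_le_add (hIioE _).2 (hIoiE _).2⟩
  -- layer cake
  have habs_mble : Measurable (fun x : ℝ => |x|) := measurable_id.abs
  have hLCl := lintegral_rpow_eq_lintegral_meas_lt_mul μl
    (ae_of_all _ fun x : ℝ => abs_nonneg x) habs_mble.aemeasurable hr
  have hLC := lintegral_rpow_eq_lintegral_meas_lt_mul μ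
    (ae_of_all _ fun x : ℝ => abs_nonneg x) habs_mble.aemeasurable hr
  have hup : (∫⁻ x, ENNReal.ofReal (|x| ^ r) ∂μl)
      ≤ ENNReal.ofReal M * ∫⁻ x, ENNReal.ofReal (|x| ^ r) ∂μ := by
    rw [hLCl, hLC, mul_left_comm (ENNReal.ofReal M) (ENNReal.ofReal r)]
    refine mul_le_mul_right ?_ _
    calc (∫⁻ t in Ioi 0, μl {a : ℝ | t < |a|} * ENNReal.ofReal (t ^ (r-1)))
        ≤ ∫⁻ t in Ioi 0, ENNReal.ofReal M * (μ {a : ℝ | t < |a|} * ENNReal.ofReal (t ^ (r-1))) := by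
          refine setLIntegral_mono' measurableSet_Ioi (fun t ht => ?_)
          rw [← mul_assoc]
          exact mul_le_mul_left ((hSt t ht).2) _
      _ = ENNReal.ofReal M * ∫⁻ t in Ioi 0, μ {a : ℝ | t < |a|} * ENNReal.ofReal (t ^ (r-1)) :=
          lintegral_const_mul' _ _ ENNReal.ofReal_ne_top
  have hlow : ENNReal.ofReal m * (∫⁻ x, ENNReal.ofReal (|x| ^ r) ∂μ)
      ≤ ∫⁻ x, ENNReal.ofReal (|x| ^ r) ∂μl := by
    rw [hLCl, hLC, mul_left_comm (ENNReal.ofReal m) (ENNReal.ofReal r)]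
    refine mul_le_mul_right ?_ _
    calc ENNReal.ofReal m * ∫⁻ t in Ioi 0, μ {a : ℝ | t < |a|} * ENNReal.ofReal (t ^ (r-1))
        = ∫⁻ t in Ioi 0, ENNReal.ofReal m * (μ {a : ℝ | t < |a|} * ENNReal.ofReal (t ^ (r-1))) :=
          (lintegral_const_mul' _ _ ENNReal.ofReal_ne_top).symm
      _ ≤ ∫⁻ t in Ioi 0, μl {a : ℝ | t < |a|} * ENNReal.ofReal (t ^ (r-1)) := by
          refine setLIntegral_mono' measurableSet_Ioi (fun t ht => ?_)
          rw [← mul_assoc]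
          exact mul_le_mul_left ((hSt t ht).1) _
  -- finiteness
  have hnn' : ∀ x : ℝ, 0 ≤ |x| ^ r := fun x => Real.rpow_nonneg (abs_nonneg x) r
  have hJfin : (∫⁻ x, ENNReal.ofReal (|x| ^ r) ∂μ) ≠ ⊤ :=
    ((hasFiniteIntegral_iff_ofReal (ae_of_all _ hnn')).mp hint.2).ne
  have hJlfin : (∫⁻ x, ENNReal.ofReal (|x| ^ r) ∂μl) ≠ ⊤ :=
    (lt_of_le_of_lt hup (ENNReal.mul_lt_top ENNReal.ofReal_lt_top hJfin.lt_top)).ne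
  have haesm : AEStronglyMeasurable (fun x : ℝ => |x| ^ r) μl :=
    ((continuous_abs.rpow_const fun _ => Or.inr hr.le).measurable).aestronglyMeasurable
  have hIntl : Integrable (fun x : ℝ => |x| ^ r) μl := by
    refine ⟨haesm, ?_⟩
    rw [hasFiniteIntegral_iff_ofReal (ae_of_all _ hnn')]
    exact lt_of_le_of_lt hup (ENNReal.mul_lt_top ENNReal.ofReal_lt_top hJfin.lt_top)
  -- real integrals
  have hIμ : ∫ x, |x| ^ r ∂μ = (∫⁻ x, ENNReal.ofReal (|x| ^ r) ∂μ).toReal :=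
    integral_eq_lintegral_of_nonneg_ae (ae_of_all _ hnn') hint.1
  have hIμl : ∫ x, |x| ^ r ∂μl = (∫⁻ x, ENNReal.ofReal (|x| ^ r) ∂μl).toReal :=
    integral_eq_lintegral_of_nonneg_ae (ae_of_all _ hnn') haesm
  have hlowR : m * ∫ x, |x| ^ r ∂μ ≤ ∫ x, |x| ^ r ∂μl := by
    rw [hIμ, hIμl]
    have h : m * (∫⁻ x, ENNReal.ofReal (|x| ^ r) ∂μ).toReal
        = (ENNReal.ofReal m * ∫⁻ x, ENNReal.ofReal (|x| ^ r) ∂μ).toReal := by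
      rw [ENNReal.toReal_mul, ENNReal.toReal_ofReal hm0.le]
    rw [h]
    exact ENNReal.toReal_mono hJlfin hlow
  have hupR : ∫ x, |x| ^ r ∂μl ≤ M * ∫ x, |x| ^ r ∂μ := by
    rw [hIμ, hIμl]
    have h : M * (∫⁻ x, ENNReal.ofReal (|x| ^ r) ∂μ).toReal
        = (ENNReal.ofReal M * ∫⁻ x, ENNReal.ofReal (|x| ^ r) ∂μ).toReal := by
      rw [ENNReal.toReal_mul, ENNReal.toReal_ofReal hM0.le]
    rw [h]
    exact ENNReal.toReal_mono (ENNReal.mul_ne_top ENNReal.ofReal_ne_top hJfin) hup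
  -- final constants
  have hc_eq : c = l / (Real.exp l - 1) := by
    have h1 : Real.exp l - 1 ≠ 0 :=
      sub_ne_zero.mpr (fun hh => hl (Real.exp_injective (by rw [hh, Real.exp_zero])))
    have h2 : Real.exp l ≠ 0 := (Real.exp_pos l).ne'
    have h3 : (1:ℝ) - Real.exp (-l) ≠ 0 := hEdef ▸ hEne
    rw [Real.exp_neg] at h3
    rw [hcdef, hEdef, Real.exp_neg]
    field_simp
  refine ⟨hIntl, ?_, ?_⟩
  · intro hlpos
    obtain ⟨_, hE⟩ | ⟨h, _⟩ := hEsign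
    swap
    · linarith
    have hcC : c ≤ C := by
      rw [hcdef, hCdef]
      exact (div_le_div_iff_of_pos_right hE).mpr hnum
    have hmc : m = c := min_eq_left hcC
    have hMC : M = C := max_eq_right hcC
    constructor
    · rw [← hc_eq, ← hmc]; exact hlowR
    · rw [← hMC]; exact hupR
  · intro hlneg
    obtain ⟨h, _⟩ | ⟨_, hE⟩ := hEsign
    · linarith
    have hCc : C ≤ c := by
      rw [hcdef, hCdef]
      exact (div_le_div_right_of_neg hE).mpr hnum
    have hmC : m = C := min_eq_right hCc
    have hMc : M = c := max_eq_left hCc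
    constructor
    · rw [← hmC]; exact hlowR
    · rw [← hc_eq, ← hMc]; exact hupR
end

section
/- Let g be a probability density on ℝ with continuous cdf G, let λ ≠ 0, and let f(x) = (λ/(1 − e^{−λ})) g(x) e^{−λG(x)} be the exp-G density. Assume x ↦ f(x) log g(x) is Lebesgue integrable. Then the Shannon entropy of f satisfies −∫_ℝ f(x) log f(x) dx = 1 − λ/(e^λ − 1) − log(λ/(1 − e^{−λ})) − ∫_ℝ f(x) log g(x) dx. -/
open Real Set MeasureTheory

open Filter Topology NNReal ENNReal


lemma expG_G_split {g : ℝ → ℝ} (hgint : Integrable g) {y x : ℝ} (h : y ≤ x) :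
    (∫ t in Iio x, g t) = (∫ t in Iio y, g t) + ∫ t in y..x, g t := by
  rw [intervalIntegral.integral_of_le h, ← setIntegral_congr_set Ico_ae_eq_Ioc,
    ← setIntegral_union ((Iio_disjoint_Ici le_rfl).mono_right Ico_subset_Ici_self) measurableSet_Ico
      hgint.integrableOn hgint.integrableOn, Iio_union_Ico_eq_Iio h]

lemma expG_G_cont {g : ℝ → ℝ} (hgint : Integrable g)
    {G : ℝ → ℝ} (hG : ∀ x, G x = ∫ t in Iio x, g t) : Continuous G := by
  have h : ∀ x, G x = G 0 + ∫ t in (0:ℝ)..x, g t := by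
    intro x
    rcases le_total 0 x with h0 | h0
    · rw [hG x, hG 0, expG_G_split hgint h0]
    · rw [hG x, hG 0, expG_G_split hgint h0, intervalIntegral.integral_symm]
      ring
  have : Continuous fun x => G 0 + ∫ t in (0:ℝ)..x, g t :=
    continuous_const.add (intervalIntegral.continuous_primitive
      (fun a b => hgint.intervalIntegrable) 0)
  exact this.congr fun x => (h x).symm

lemma expG_G_mono {g : ℝ → ℝ} (hg0 : ∀ x, 0 ≤ g x) (hgint : Integrable g)
    {G : ℝ → ℝ} (hG : ∀ x, G x = ∫ t in Iio x, g t) : Monotone G := by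
  intro y x h
  rw [hG x, hG y]
  exact setIntegral_mono_set hgint.integrableOn
    (Eventually.of_forall fun t => hg0 t)
    (HasSubset.Subset.eventuallyLE (Iio_subset_Iio h))

lemma expG_G_nonneg {g : ℝ → ℝ} (hg0 : ∀ x, 0 ≤ g x)
    {G : ℝ → ℝ} (hG : ∀ x, G x = ∫ t in Iio x, g t) : ∀ x, 0 ≤ G x := by
  intro x; rw [hG]
  exact setIntegral_nonneg measurableSet_Iio fun t _ => hg0 t

lemma expG_G_le_one {g : ℝ → ℝ} (hg0 : ∀ x, 0 ≤ g x) (hgint : Integrable g)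
    (hg1 : ∫ x, g x = 1)
    {G : ℝ → ℝ} (hG : ∀ x, G x = ∫ t in Iio x, g t) : ∀ x, G x ≤ 1 := by
  intro x; rw [hG, ← hg1]
  exact setIntegral_le_integral hgint (Eventually.of_forall hg0)
section
variable {g : ℝ → ℝ} {G : ℝ → ℝ}

lemma expG_mu_Iio (hg0 : ∀ x, 0 ≤ g x) (hgint : Integrable g)
    (hG : ∀ x, G x = ∫ t in Iio x, g t) (a : ℝ) :
    (volume.withDensity (fun x => ENNReal.ofReal (g x))) (Iio a)
      = ENNReal.ofReal (G a) := by
  rw [withDensity_apply _ measurableSet_Iio, hG a,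
    ofReal_integral_eq_lintegral_ofReal hgint.integrableOn
      (Eventually.of_forall hg0)]

lemma expG_mu_Iic (hg0 : ∀ x, 0 ≤ g x) (hgint : Integrable g)
    (hG : ∀ x, G x = ∫ t in Iio x, g t) (a : ℝ) :
    (volume.withDensity (fun x => ENNReal.ofReal (g x))) (Iic a)
      = ENNReal.ofReal (G a) := by
  rw [← expG_mu_Iio hg0 hgint hG a]
  refine le_antisymm ?_ (measure_mono Iio_subset_Iic_self)
  have h1 : (volume.withDensity (fun x => ENNReal.ofReal (g x))) {a} = 0 := by
    rw [withDensity_apply _ (measurableSet_singleton a)]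
    exact setLIntegral_measure_zero _ _ (measure_singleton a)
  calc (volume.withDensity (fun x => ENNReal.ofReal (g x))) (Iic a)
      ≤ _ + _ := (measure_union_le (Iio a) {a}).trans_eq' (by rw [Iio_union_right])
    _ = _ := by rw [h1, add_zero]

lemma expG_mu_univ (hg0 : ∀ x, 0 ≤ g x) (hgint : Integrable g) (hg1 : ∫ x, g x = 1) :
    IsProbabilityMeasure (volume.withDensity (fun x => ENNReal.ofReal (g x))) := by
  constructor
  rw [withDensity_apply _ MeasurableSet.univ, Measure.restrict_univ,
    ← ofReal_integral_eq_lintegral_ofReal hgint (Eventually.of_forall hg0), hg1,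
    ENNReal.ofReal_one]

lemma expG_map (hg0 : ∀ x, 0 ≤ g x) (hgint : Integrable g) (hg1 : ∫ x, g x = 1)
    (hG : ∀ x, G x = ∫ t in Iio x, g t) :
    Measure.map G (volume.withDensity (fun x => ENNReal.ofReal (g x)))
      = volume.restrict (Ioc 0 1) := by
  set μ := volume.withDensity (fun x => ENNReal.ofReal (g x)) with hμ
  have hcont : Continuous G := expG_G_cont hgint hG
  have hmono : Monotone G := expG_G_mono hg0 hgint hG
  have h0 : ∀ x, 0 ≤ G x := expG_G_nonneg hg0 hG
  have h1 : ∀ x, G x ≤ 1 := expG_G_le_one hg0 hgint hg1 hG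
  have hprob : IsProbabilityMeasure μ := expG_mu_univ hg0 hgint hg1
  have hmap : IsProbabilityMeasure (Measure.map G μ) :=
    Measure.isProbabilityMeasure_map hcont.measurable.aemeasurable
  have htop : Tendsto G atTop (𝓝 1) := by
    have h := tendsto_setIntegral_of_monotone (s := fun b : ℝ => Iio b)
      (fun b => measurableSet_Iio) (fun a b h => Iio_subset_Iio h)
      (by rw [iUnion_Iio]; exact hgint.integrableOn)
    rw [iUnion_Iio, Measure.restrict_univ] at h
    rw [show (1:ℝ) = ∫ x, g x from hg1.symm]
    exact h.congr fun b => (hG b).symm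
  have hbot : Tendsto (fun b : ℝ => G (-b)) atTop (𝓝 0) := by
    have h := tendsto_setIntegral_of_antitone (s := fun b : ℝ => Iio (-b))
      (fun b => measurableSet_Iio)
      (fun a b hab => Iio_subset_Iio (by linarith)) ⟨0, hgint.integrableOn⟩
    have hempty : (⋂ b : ℝ, Iio (-b)) = ∅ := by
      ext x; simp only [mem_iInter, mem_Iio, mem_empty_iff_false, iff_false, not_forall, not_lt]
      exact ⟨-x, by linarith⟩
    rw [hempty] at h
    simpa using h.congr fun b => (hG (-b)).symm
  refine Measure.ext_of_Iic _ _ fun t => ?_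
  rw [Measure.map_apply hcont.measurable measurableSet_Iic,
    Measure.restrict_apply measurableSet_Iic]
  have hrhs : Iic t ∩ Ioc 0 1 = Ioc 0 (min t 1) := by
    ext x
    simp only [mem_inter_iff, mem_Iic, mem_Ioc, le_min_iff]
    tauto
  rw [hrhs, Real.volume_Ioc]
  rcases lt_or_ge t 0 with ht | ht
  · have hem : G ⁻¹' Iic t = ∅ := by
      ext x; simp only [mem_preimage, mem_Iic, mem_empty_iff_false, iff_false, not_le]
      exact lt_of_lt_of_le ht (h0 x)
    rw [hem, measure_empty, sub_zero, min_eq_left (by linarith : t ≤ 1), eq_comm,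
      ENNReal.ofReal_eq_zero]
    exact ht.le
  · rcases le_or_gt 1 t with ht1 | ht1
    · have huniv : G ⁻¹' Iic t = univ := by
        ext x; simp only [mem_preimage, mem_Iic, mem_univ, iff_true]
        exact (h1 x).trans ht1
      rw [huniv, measure_univ, min_eq_right ht1, sub_zero, ENNReal.ofReal_one]
    · set S := G ⁻¹' Iic t with hS
      rw [min_eq_left ht1.le, sub_zero]
      by_cases hne : S.Nonempty
      · have hbdd : BddAbove S := by
          obtain ⟨b, hb⟩ : ∃ b, t < G b :=
            (htop.eventually (eventually_gt_nhds ht1)).exists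
          exact ⟨b, fun x hx => by
            by_contra hxb
            exact absurd (hmono (le_of_not_ge hxb)) (not_le.mpr (lt_of_le_of_lt hx hb))⟩
        have hclosed : IsClosed S := isClosed_Iic.preimage hcont
        set a := sSup S with ha
        have haS : a ∈ S := hclosed.csSup_mem hne hbdd
        have hGat : G a = t := by
          refine le_antisymm haS ?_
          have htend : Tendsto G (𝓝[>] a) (𝓝 (G a)) :=
            (hcont.tendsto a).mono_left nhdsWithin_le_nhds
          refine ge_of_tendsto htend ?_
          refine eventually_nhdsWithin_of_forall fun x hx => ?_
          have hxS : x ∉ S := fun hxS => absurd (le_csSup hbdd hxS) (not_le.mpr hx)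
          exact le_of_not_ge hxS
        have hsub1 : Iio a ⊆ S := fun x hx => by
          obtain ⟨s, hsS, hxs⟩ := exists_lt_of_lt_csSup hne hx
          exact le_trans (hmono hxs.le) hsS
        have hsub2 : S ⊆ Iic a := fun x hx => le_csSup hbdd hx
        refine le_antisymm ?_ ?_
        · calc μ S ≤ μ (Iic a) := measure_mono hsub2
            _ = ENNReal.ofReal t := by rw [expG_mu_Iic hg0 hgint hG, hGat]
        · calc ENNReal.ofReal t = μ (Iio a) := by rw [expG_mu_Iio hg0 hgint hG, hGat]
            _ ≤ μ S := measure_mono hsub1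
      · rw [not_nonempty_iff_eq_empty] at hne
        have ht0 : t = 0 := by
          by_contra h
          have htpos : 0 < t := lt_of_le_of_ne ht (Ne.symm h)
          obtain ⟨b, hb⟩ := (hbot.eventually (eventually_lt_nhds htpos)).exists
          have : (-b) ∈ S := le_of_lt hb
          rw [hne] at this
          exact this
        rw [hne, ht0, measure_empty, ENNReal.ofReal_zero]
end
lemma expG_int {g G : ℝ → ℝ} (hg0 : ∀ x, 0 ≤ g x) (hgint : Integrable g)
    (hg1 : ∫ x, g x = 1) (hG : ∀ x, G x = ∫ t in Iio x, g t)
    (φ : ℝ → ℝ) (hφ : Continuous φ) :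
    ∫ x, φ (G x) * g x = ∫ u in Ioc (0:ℝ) 1, φ u := by
  have hcont : Continuous G := expG_G_cont hgint hG
  have hd : (fun x => ENNReal.ofReal (g x))
      = fun x => ((fun x => (g x).toNNReal) x : ℝ≥0∞) := by
    ext x; simp [ENNReal.ofReal]
  have hmeas : AEMeasurable (fun x => (g x).toNNReal) volume :=
    hgint.aemeasurable.real_toNNReal
  calc ∫ x, φ (G x) * g x
      = ∫ x, (g x).toNNReal • φ (G x) := by
        refine integral_congr_ae (Eventually.of_forall fun x => ?_)
        simp [NNReal.smul_def, Real.coe_toNNReal _ (hg0 x), mul_comm]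
    _ = ∫ x, φ (G x) ∂(volume.withDensity (fun x => ENNReal.ofReal (g x))) := by
        rw [hd, integral_withDensity_eq_integral_smul₀ hmeas]
    _ = ∫ u, φ u ∂(Measure.map G (volume.withDensity (fun x => ENNReal.ofReal (g x)))) := by
        rw [integral_map hcont.measurable.aemeasurable
          (hφ.aestronglyMeasurable)]
    _ = ∫ u in Ioc (0:ℝ) 1, φ u := by rw [expG_map hg0 hgint hg1 hG]

/-- Let `g` be a probability density on `ℝ` with continuous cdf `G`,
`λ ≠ 0`, and `f(x) = (λ/(1 − e^{−λ})) g(x) e^{−λG(x)}` the exp-G density. If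
`x ↦ f(x) log g(x)` is integrable, then the Shannon entropy of `f` is
`−∫ f log f = 1 − λ/(e^λ − 1) − log(λ/(1 − e^{−λ})) − ∫ f log g`. -/
theorem expG_shannon_entropy
    (g : ℝ → ℝ) (hg0 : ∀ x, 0 ≤ g x) (hgint : Integrable g)
    (hg1 : ∫ x, g x = 1)
    (G : ℝ → ℝ) (hG : ∀ x, G x = ∫ t in Iio x, g t)
    (l : ℝ) (hl : l ≠ 0)
    (f : ℝ → ℝ)
    (hf : ∀ x, f x = l / (1 - Real.exp (-l)) * g x * Real.exp (-(l * G x)))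
    (hint : Integrable (fun x => f x * Real.log (g x))) :
    -∫ x, f x * Real.log (f x)
      = 1 - l / (Real.exp l - 1) - Real.log (l / (1 - Real.exp (-l)))
        - ∫ x, f x * Real.log (g x) := by
  have hne2 : Real.exp l ≠ 1 := fun h => hl ((Real.exp_eq_one_iff l).mp h)
  have hne1 : (1 : ℝ) - Real.exp (-l) ≠ 0 := by
    intro h
    apply hl
    have : Real.exp (-l) = 1 := by linarith
    simpa using (Real.exp_eq_one_iff (-l)).mp this
  set c := l / (1 - Real.exp (-l)) with hc
  have hcpos : 0 < c := by
    rcases lt_or_gt_of_ne hl with h | h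
    · have : 1 < Real.exp (-l) := by
        rw [← Real.exp_zero]; exact Real.exp_lt_exp.mpr (by linarith)
      exact div_pos_of_neg_of_neg h (by linarith)
    · have : Real.exp (-l) < 1 := by
        rw [← Real.exp_zero]; exact Real.exp_lt_exp.mpr (by linarith)
      exact div_pos h (by linarith)
  have hcont : Continuous G := expG_G_cont hgint hG
  have h0 : ∀ x, 0 ≤ G x := expG_G_nonneg hg0 hG
  have h1 : ∀ x, G x ≤ 1 := expG_G_le_one hg0 hgint hg1 hG
  -- integrability of f
  have hfm : AEStronglyMeasurable f volume := by
    have : AEStronglyMeasurable (fun x => c * g x * Real.exp (-(l * G x))) volume :=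
      ((hgint.aestronglyMeasurable.const_mul c).mul
        ((Real.continuous_exp.comp ((continuous_const.mul hcont).neg)).aestronglyMeasurable))
    exact this.congr (Eventually.of_forall fun x => (hf x).symm)
  have hfb : ∀ x, |f x| ≤ c * Real.exp |l| * g x := by
    intro x
    rw [hf x, abs_of_nonneg (mul_nonneg (mul_nonneg hcpos.le (hg0 x)) (Real.exp_nonneg _))]
    have hle : Real.exp (-(l * G x)) ≤ Real.exp |l| := by
      apply Real.exp_le_exp.mpr
      have h01 := h0 x; have h11 := h1 x
      rcases le_or_gt 0 l with h | h
      · nlinarith [le_abs_self l]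
      · nlinarith [neg_le_abs l]
    calc c * g x * Real.exp (-(l * G x)) ≤ c * g x * Real.exp |l| :=
        mul_le_mul_of_nonneg_left hle (mul_nonneg hcpos.le (hg0 x))
      _ = c * Real.exp |l| * g x := by ring
  have hfint : Integrable f := by
    refine Integrable.mono' ((hgint.const_mul (c * Real.exp |l|))) hfm ?_
    exact Eventually.of_forall hfb
  have hf0 : ∀ x, 0 ≤ f x := fun x => by
    rw [hf x]; exact mul_nonneg (mul_nonneg hcpos.le (hg0 x)) (Real.exp_nonneg _)
  have hfG : Integrable (fun x => f x * G x) := by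
    refine Integrable.mono' hfint (hfm.mul hcont.aestronglyMeasurable) ?_
    refine Eventually.of_forall fun x => ?_
    rw [Real.norm_eq_abs, abs_of_nonneg (mul_nonneg (hf0 x) (h0 x))]
    calc f x * G x ≤ f x * 1 := mul_le_mul_of_nonneg_left (h1 x) (hf0 x)
      _ = f x := mul_one _
  -- pointwise identity
  have heq : ∀ x, f x * Real.log (f x)
      = f x * Real.log c + f x * Real.log (g x) - l * (f x * G x) := by
    intro x
    by_cases hgx : g x = 0
    · rw [hf x, hgx]; simp
    · have hgpos : 0 < g x := lt_of_le_of_ne (hg0 x) (Ne.symm hgx)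
      have hfx : f x = c * g x * Real.exp (-(l * G x)) := hf x
      rw [hfx, Real.log_mul (by positivity) (Real.exp_ne_zero _),
        Real.log_mul (ne_of_gt hcpos) hgx, Real.log_exp]
      ring
  -- key integral computations
  have hI1 : ∫ u in Ioc (0:ℝ) 1, Real.exp (-(l*u)) = (1 - Real.exp (-l))/l := by
    rw [← intervalIntegral.integral_of_le zero_le_one]
    have hder : ∀ u ∈ uIcc (0:ℝ) 1,
        HasDerivAt (fun u => -Real.exp (-(l*u))/l) (Real.exp (-(l*u))) u := by
      intro u _
      have h1 : HasDerivAt (fun u : ℝ => -(l*u)) (-l) u := by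
        simpa using ((hasDerivAt_id u).const_mul l).fun_neg
      have h3 := (h1.exp.fun_neg).div_const l
      convert h3 using 1 <;> try rfl
      field_simp
    rw [intervalIntegral.integral_eq_sub_of_hasDerivAt hder
      ((Real.continuous_exp.comp (continuous_const.mul continuous_id).neg).intervalIntegrable _ _)]
    simp only [mul_one, mul_zero, neg_zero, Real.exp_zero]
    field_simp
    ring
  have hI2 : ∫ u in Ioc (0:ℝ) 1, u * Real.exp (-(l*u))
      = -Real.exp (-l)/l - Real.exp (-l)/l^2 + 1/l^2 := by
    rw [← intervalIntegral.integral_of_le zero_le_one]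
    have hder : ∀ u ∈ uIcc (0:ℝ) 1,
        HasDerivAt (fun u => -(u * Real.exp (-(l*u)))/l - Real.exp (-(l*u))/l^2)
          (u * Real.exp (-(l*u))) u := by
      intro u _
      have h1 : HasDerivAt (fun u : ℝ => -(l*u)) (-l) u := by
        simpa using ((hasDerivAt_id u).const_mul l).fun_neg
      have he := h1.exp
      have hprod := (hasDerivAt_id u).mul he
      have h3 := (hprod.fun_neg.div_const l).sub (he.div_const (l^2))
      convert h3 using 1 <;> try rfl
      field_simp
      simp only [id]; ring
    rw [intervalIntegral.integral_eq_sub_of_hasDerivAt hder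
      (((continuous_id.mul (Real.continuous_exp.comp
        (continuous_const.mul continuous_id).neg))).intervalIntegrable _ _)]
    simp only [mul_one, mul_zero, neg_zero, Real.exp_zero, one_mul, zero_mul]
    ring
  -- ∫ f = 1
  have hfone : ∫ x, f x = 1 := by
    have := expG_int hg0 hgint hg1 hG (fun u => Real.exp (-(l*u)))
      (Real.continuous_exp.comp (continuous_const.mul continuous_id).neg)
    have hrw : ∫ x, f x = c * ∫ x, Real.exp (-(l * G x)) * g x := by
      rw [← integral_const_mul]
      exact integral_congr_ae (Eventually.of_forall fun x => by rw [hf x]; ring)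
    rw [hrw, this, hI1, hc]
    field_simp
  -- ∫ f G
  have hfGval : ∫ x, f x * G x = c * (-Real.exp (-l)/l - Real.exp (-l)/l^2 + 1/l^2) := by
    have := expG_int hg0 hgint hg1 hG (fun u => u * Real.exp (-(l*u)))
      (continuous_id.mul (Real.continuous_exp.comp (continuous_const.mul continuous_id).neg))
    have hrw : ∫ x, f x * G x = c * ∫ x, (G x * Real.exp (-(l * G x))) * g x := by
      rw [← integral_const_mul]
      refine integral_congr_ae (Eventually.of_forall fun x => ?_)
      show f x * G x = c * (G x * Real.exp (-(l * G x)) * g x)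
      rw [hf x]; ring
    rw [hrw, this, hI2]
  -- split integral
  have hsplit : ∫ x, f x * Real.log (f x)
      = (∫ x, f x) * Real.log c + (∫ x, f x * Real.log (g x)) - l * ∫ x, f x * G x := by
    rw [show (fun x => f x * Real.log (f x))
        = fun x => (f x * Real.log c + f x * Real.log (g x)) - l * (f x * G x) from
      funext fun x => by rw [heq x]]
    have e1 : Integrable (fun x => f x * Real.log c + f x * Real.log (g x)) volume :=
      (hfint.mul_const _).add hint
    have e2 : Integrable (fun x => l * (f x * G x)) volume := hfG.const_mul l
    rw [integral_sub e1 e2, integral_add (hfint.mul_const _) hint,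
      integral_mul_const, integral_const_mul]
  rw [hsplit, hfone, hfGval]
  have hfin : l * (c * (-Real.exp (-l)/l - Real.exp (-l)/l^2 + 1/l^2))
      = 1 - l / (Real.exp l - 1) := by
    have hexp : Real.exp (-l) = (Real.exp l)⁻¹ := Real.exp_neg l
    have hne3 : Real.exp l - 1 ≠ 0 := sub_ne_zero.mpr hne2
    rw [hc, hexp] at *
    field_simp
    ring
  rw [← hc] at *
  linarith [hfin]
end

section
/- For every λ ≠ 0 and every u ∈ [0,1], 1 − F_λ(u) = F_{−λ}(1 − u). Consequently (reciprocal property), if X is an almost surely positive random variable with cdf x ↦ F_λ(G(x)) where G is a continuous cdf, then for every x > 0, P(1/X ≤ x) = F_{−λ}(1 − G(1/x)); that is, 1/X follows the exp-S distribution with parameter −λ, where S(x) = 1 − G(1/x) is the cdf of 1/Y for Y ∼ G. -/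
open Real Set MeasureTheory

/-- For `λ ≠ 0` and `u ∈ [0,1]`, `1 − F_λ(u) = F_{−λ}(1 − u)`.
Consequently (reciprocal property), if `X` is an a.s. positive random variable with law
`μ` and cdf `x ↦ F_λ(G(x))` for a continuous cdf `G`, then for every `x > 0`,
`P(1/X ≤ x) = F_{−λ}(1 − G(1/x))`; that is, `1/X` follows the exp-S distribution with
parameter `−λ`, where `S(x) = 1 − G(1/x)`. -/
theorem expG_reciprocal_property (l : ℝ) (hl : l ≠ 0) :
    (∀ u ∈ Icc (0:ℝ) 1,
      1 - (1 - Real.exp (-(l * u))) / (1 - Real.exp (-l))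
        = (1 - Real.exp (-(-l * (1 - u)))) / (1 - Real.exp (-(-l)))) ∧
    ∀ (μ : Measure ℝ), IsProbabilityMeasure μ → μ {y : ℝ | y ≤ 0} = 0 →
      ∀ G : ℝ → ℝ, Continuous G → (∀ x, G x ∈ Icc (0:ℝ) 1) → Monotone G →
      (∀ x, (μ (Iic x)).toReal = (1 - Real.exp (-(l * G x))) / (1 - Real.exp (-l))) →
      ∀ x : ℝ, 0 < x →
        ((μ.map (fun y => 1 / y)) (Iic x)).toReal
          = (1 - Real.exp (-(-l * (1 - G (1 / x))))) / (1 - Real.exp (-(-l))) := by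
  have he : (1 : ℝ) - Real.exp (-l) ≠ 0 := by
    intro h
    have : Real.exp (-l) = 1 := by linarith
    have h0 : Real.exp (-l) = Real.exp 0 := by simpa using this
    exact hl (by simpa using Real.exp_eq_exp.mp h0)
  have he' : (1 : ℝ) - Real.exp l ≠ 0 := by
    intro h
    have : Real.exp l = 1 := by linarith
    have h0 : Real.exp l = Real.exp 0 := by simpa using this
    exact hl (by simpa using Real.exp_eq_exp.mp h0)
  have hBC : Real.exp (-l) * Real.exp l = 1 := by
    rw [← Real.exp_add]; simp
  have main : ∀ u : ℝ,
      1 - (1 - Real.exp (-(l * u))) / (1 - Real.exp (-l))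
        = (1 - Real.exp (-(-l * (1 - u)))) / (1 - Real.exp (-(-l))) := by
    intro u
    have hAC : Real.exp (-(-l * (1 - u))) = Real.exp l * Real.exp (-(l * u)) := by
      rw [← Real.exp_add]; ring_nf
    rw [hAC, neg_neg]
    field_simp
    linear_combination (1 - Real.exp (-(l * u))) * hBC
  refine ⟨fun u _ => main u, ?_⟩
  intro μ hμ hpos G hGc hGmem hGmono hcdf x hx
  set a : ℝ := 1 / x with ha_def
  have ha : 0 < a := by positivity
  have hmeas : Measurable fun y : ℝ => 1 / y := by
    simpa [one_div] using (measurable_inv : Measurable fun y : ℝ => y⁻¹)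
  rw [Measure.map_apply hmeas measurableSet_Iic]
  have hfin : ∀ s : Set ℝ, μ s ≠ ⊤ := fun s => (measure_lt_top μ s).ne
  have hset : (fun y : ℝ => 1 / y) ⁻¹' Iic x \ {y : ℝ | y ≤ 0} = Ici a \ {y : ℝ | y ≤ 0} := by
    ext y
    simp only [mem_diff, mem_preimage, mem_Iic, mem_setOf_eq, mem_Ici, not_le]
    constructor
    · rintro ⟨h1, h2⟩
      refine ⟨?_, h2⟩
      rw [ha_def, div_le_iff₀ hx]
      rw [div_le_iff₀ h2] at h1
      linarith [mul_comm x y]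
    · rintro ⟨h1, h2⟩
      refine ⟨?_, h2⟩
      rw [div_le_iff₀ h2]
      rw [ha_def, div_le_iff₀ hx] at h1
      linarith [mul_comm x y]
  have h1 : μ ((fun y : ℝ => 1 / y) ⁻¹' Iic x) = μ (Ici a) := by
    rw [← measure_diff_null hpos, hset, measure_diff_null hpos]
  set F : ℝ → ℝ := fun b => (μ (Iic b)).toReal with hF_def
  have hFcont : Continuous F := by
    have : F = fun b => (1 - Real.exp (-(l * G b))) / (1 - Real.exp (-l)) := funext hcdf
    rw [this]
    exact (continuous_const.sub (Real.continuous_exp.comp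
      ((continuous_const.mul hGc).neg))).div_const _
  have hIocReal : ∀ b, b ≤ a → (μ (Ioc b a)).toReal = F a - F b := by
    intro b hb
    have hdiff : Iic a \ Iic b = Ioc b a := Iic_sdiff_Iic
    rw [← hdiff, measure_diff (Iic_subset_Iic.mpr hb) measurableSet_Iic.nullMeasurableSet
      (hfin _), ENNReal.toReal_sub_of_le (measure_mono (Iic_subset_Iic.mpr hb)) (hfin _)]
  have hatom : μ {a} = 0 := by
    have key : ∀ b ∈ Iio a, (μ {a}).toReal ≤ F a - F b := by
      intro b hb
      have hsub : ({a} : Set ℝ) ⊆ Ioc b a := by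
        simp [singleton_subset_iff, hb, mem_Ioc, le_refl]
        exact hb
      have := ENNReal.toReal_mono (hfin _) (measure_mono hsub)
      rwa [hIocReal b hb.le] at this
    have htends : Filter.Tendsto (fun b => F a - F b) (nhdsWithin a (Iio a)) (nhds 0) := by
      have h2 : Filter.Tendsto F (nhdsWithin a (Iio a)) (nhds (F a)) :=
        (hFcont.tendsto a).mono_left nhdsWithin_le_nhds
      have h3 := Filter.Tendsto.sub (tendsto_const_nhds (x := F a)) h2
      simpa using h3
    have hle : (μ {a}).toReal ≤ 0 :=
      ge_of_tendsto htends (eventually_mem_nhdsWithin.mono key)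
    have : (μ {a}).toReal = 0 := le_antisymm hle ENNReal.toReal_nonneg
    exact ((ENNReal.toReal_eq_zero_iff _).mp this).resolve_right (hfin _)
  have hIio : μ (Iio a) = μ (Iic a) := by
    apply le_antisymm (measure_mono Iio_subset_Iic_self)
    have hunion : Iic a = Iio a ∪ {a} := by
      ext y; simp [le_iff_lt_or_eq]
    calc μ (Iic a) ≤ μ (Iio a) + μ {a} := by rw [hunion]; exact measure_union_le _ _
      _ = μ (Iio a) := by rw [hatom, add_zero]
  have hIci : μ (Ici a) = 1 - μ (Iic a) := by
    have := measure_compl (measurableSet_Iio (a := a)) (hfin _)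
    rw [compl_Iio] at this
    rw [this, hIio, measure_univ]
  rw [h1, hIci, ENNReal.toReal_sub_of_le prob_le_one ENNReal.one_ne_top, ENNReal.toReal_one,
    hcdf a, main (G a)]
end

section
/- Let α > 0, β > 0, r > 0 and λ ≠ 0, and let f be the exp-Weibull density f(x) = (λ α β^{−α}/(1 − e^{−λ})) x^{α−1} exp{−λ(1 − e^{−(x/β)^α}) − (x/β)^α} for x > 0. Then the r-th moment is ∫_0^∞ x^r f(x) dx = (λ β^r Γ(r/α + 1)/(e^λ − 1)) · Σ_{k=0}^∞ λ^k/(k! (k+1)^{r/α + 1}), the series being absolutely convergent. -/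
open Real Set MeasureTheory

lemma aux_intOn {p q b : ℝ} (hp : 0 < p) (hq : -1 < q) (hb : 0 < b) :
    IntegrableOn (fun x : ℝ => x ^ q * Real.exp (-b * x ^ p)) (Ioi 0) := by
  have ha : 0 < (q + 1) / p := div_pos (by linarith) hp
  have h1 : IntegrableOn (fun y : ℝ => Real.exp (-y) * y ^ ((q + 1) / p - 1)) (Ioi 0) :=
    Real.GammaIntegral_convergent ha
  have h2 : IntegrableOn (fun y : ℝ => Real.exp (-(b * y)) * (b * y) ^ ((q + 1) / p - 1))
      (Ioi 0) := by
    have := (integrableOn_Ioi_comp_mul_left_iff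
      (fun y : ℝ => Real.exp (-y) * y ^ ((q + 1) / p - 1)) 0 hb).mpr
    simpa using this (by simpa using h1)
  have h3 : IntegrableOn (fun y : ℝ => y ^ ((q + 1) / p - 1) * Real.exp (-(b * y))) (Ioi 0) := by
    refine IntegrableOn.congr_fun (h2.const_mul (b ^ (1 - (q + 1) / p) : ℝ))
      (fun y hy => ?_) measurableSet_Ioi
    have hy0 : (0:ℝ) < y := hy
    have hb1 : b ^ (1 - (q + 1) / p) * b ^ ((q + 1) / p - 1) = 1 := by
      rw [← Real.rpow_add hb]; norm_num
    rw [mul_rpow hb.le hy0.le]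
    linear_combination (Real.exp (-(b * y)) * y ^ ((q + 1) / p - 1)) * hb1
  have h5 := (integrableOn_Ioi_comp_rpow_iff'
    (fun y : ℝ => y ^ ((q + 1) / p - 1) * Real.exp (-(b * y))) (p := p) hp.ne').mpr h3
  refine h5.congr_fun (fun x hx => ?_) measurableSet_Ioi
  have hx0 : (0:ℝ) < x := hx
  have he : p - 1 + p * ((q + 1) / p - 1) = q := by field_simp; ring
  beta_reduce
  rw [smul_eq_mul, ← mul_assoc, ← Real.rpow_mul hx0.le, ← Real.rpow_add hx0, he, neg_mul]

/-- The `r`-th moment of the exp-Weibull distribution: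
`∫_0^∞ x^r f(x) dx = (λ β^r Γ(r/α + 1)/(e^λ − 1)) Σ_{k≥0} λ^k/(k! (k+1)^{r/α+1})`,
the series being absolutely convergent. -/
theorem expWeibull_moment (α β r l : ℝ) (hα : 0 < α) (hβ : 0 < β) (hr : 0 < r)
    (hl : l ≠ 0)
    (f : ℝ → ℝ)
    (hf : ∀ x, f x = l * α * β ^ (-α) / (1 - Real.exp (-l)) * x ^ (α - 1) *
      Real.exp (-(l * (1 - Real.exp (-(x / β) ^ α))) - (x / β) ^ α)) :
    Summable (fun k : ℕ =>
      |l ^ k / ((Nat.factorial k : ℝ) * ((k : ℝ) + 1) ^ (r / α + 1))|) ∧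
    ∫ x in Ioi (0:ℝ), x ^ r * f x
      = l * β ^ r * Real.Gamma (r / α + 1) / (Real.exp l - 1) *
        ∑' k : ℕ, l ^ k / ((Nat.factorial k : ℝ) * ((k : ℝ) + 1) ^ (r / α + 1)) := by
  have hs : (0:ℝ) < r / α + 1 := by positivity
  have hsum : Summable (fun k : ℕ =>
      |l ^ k / ((Nat.factorial k : ℝ) * ((k : ℝ) + 1) ^ (r / α + 1))|) := by
    refine Summable.of_nonneg_of_le (fun k => abs_nonneg _) (fun k => ?_)
      (Real.summable_pow_div_factorial |l|)
    have hk1 : (1:ℝ) ≤ ((k:ℝ) + 1) ^ (r / α + 1) :=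
      Real.one_le_rpow (by linarith [Nat.cast_nonneg (α := ℝ) k]) hs.le
    have hfac : (0:ℝ) < (Nat.factorial k : ℝ) := by positivity
    rw [abs_div, abs_pow, abs_mul, Nat.abs_cast,
      abs_of_nonneg (by positivity : (0:ℝ) ≤ ((k:ℝ) + 1) ^ (r / α + 1))]
    rw [div_le_div_iff₀ (by positivity) hfac]
    have h1 : |l| ^ k * (Nat.factorial k : ℝ) ≤
        |l| ^ k * ((Nat.factorial k : ℝ) * (((k:ℝ) + 1) ^ (r / α + 1))) := by
      gcongr
      exact le_mul_of_one_le_right hfac.le hk1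
    linarith [h1]
  refine ⟨hsum, ?_⟩
  -- notation
  set C : ℝ := l * α * β ^ (-α) / (1 - Real.exp (-l)) with hC
  set F : ℕ → ℝ → ℝ := fun k x => C * Real.exp (-l) * (l ^ k / (Nat.factorial k : ℝ)) *
    (x ^ (r + α - 1) * Real.exp (-(((k:ℝ) + 1) * β ^ (-α)) * x ^ α)) with hF
  have hβα : (0:ℝ) < β ^ (-α) := Real.rpow_pos_of_pos hβ _
  have hq : (-1:ℝ) < r + α - 1 := by linarith
  have hexpser : ∀ y : ℝ, Real.exp y = ∑' k : ℕ, y ^ k / (Nat.factorial k : ℝ) := by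
    intro y
    rw [Real.exp_eq_exp_ℝ, NormedSpace.exp_eq_tsum_div]
  -- value of the k-th integral
  have hIk : ∀ k : ℕ, (∫ x in Ioi (0:ℝ),
      x ^ (r + α - 1) * Real.exp (-(((k:ℝ) + 1) * β ^ (-α)) * x ^ α))
      = (((k:ℝ) + 1) ^ (-(r / α + 1)) * β ^ (r + α)) * ((1 / α) * Real.Gamma (r / α + 1)) := by
    intro k
    have hk0 : (0:ℝ) < (k:ℝ) + 1 := by positivity
    rw [integral_rpow_mul_exp_neg_mul_rpow hα hq (by positivity)]
    rw [show r + α - 1 + 1 = r + α by ring]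
    rw [show (r + α) / α = r / α + 1 by field_simp]
    rw [show (-(r + α)) / α = -(r / α + 1) by field_simp]
    rw [Real.mul_rpow hk0.le hβα.le, ← Real.rpow_mul hβ.le]
    rw [show (-α) * (-(r / α + 1)) = r + α by field_simp]
    ring
  -- integrability of each F k
  have hFint : ∀ k : ℕ, Integrable (F k) (volume.restrict (Ioi (0:ℝ))) := by
    intro k
    have hk0 : (0:ℝ) < ((k:ℝ) + 1) * β ^ (-α) := by positivity
    exact (aux_intOn hα hq hk0).const_mul _
  -- norm integrals
  have hnorm : ∀ k : ℕ, (∫ x in Ioi (0:ℝ), ‖F k x‖)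
      = (|C * Real.exp (-l)| * (β ^ (r + α) * ((1 / α) * Real.Gamma (r / α + 1))))
        * (|l| ^ k / (Nat.factorial k : ℝ)) * (((k:ℝ) + 1) ^ (-(r / α + 1))) := by
    intro k
    have h1 : (∫ x in Ioi (0:ℝ), ‖F k x‖)
        = |C * Real.exp (-l) * (l ^ k / (Nat.factorial k : ℝ))| *
          ∫ x in Ioi (0:ℝ), x ^ (r + α - 1) * Real.exp (-(((k:ℝ) + 1) * β ^ (-α)) * x ^ α) := by
      rw [← integral_const_mul]
      refine setIntegral_congr_fun measurableSet_Ioi (fun x hx => ?_)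
      have hx0 : (0:ℝ) < x := hx
      rw [hF]
      simp only []
      rw [Real.norm_eq_abs, abs_mul, abs_of_nonneg
        (mul_nonneg (Real.rpow_nonneg hx0.le _) (Real.exp_pos _).le)]
    rw [h1, hIk k]
    rw [abs_mul, abs_div, abs_pow, Nat.abs_cast]
    ring
  -- summability of norm integrals
  have hFsum : Summable (fun k : ℕ => ∫ x in Ioi (0:ℝ), ‖F k x‖) := by
    refine Summable.of_nonneg_of_le
      (fun k => integral_nonneg (fun x => norm_nonneg _)) (fun k => ?_)
      ((Real.summable_pow_div_factorial |l|).mul_left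
        (|C * Real.exp (-l)| * (β ^ (r + α) * ((1 / α) * Real.Gamma (r / α + 1)))))
    rw [hnorm k]
    have hc1 : ((k:ℝ) + 1) ^ (-(r / α + 1)) ≤ 1 :=
      Real.rpow_le_one_of_one_le_of_nonpos (by linarith [Nat.cast_nonneg (α := ℝ) k])
        (by linarith)
    have hnn : (0:ℝ) ≤ (|C * Real.exp (-l)| * (β ^ (r + α) * ((1 / α) * Real.Gamma (r / α + 1))))
        * (|l| ^ k / (Nat.factorial k : ℝ)) := by
      have := Real.Gamma_nonneg_of_nonneg hs.le
      positivity
    exact mul_le_of_le_one_right hnn hc1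
  -- pointwise series expansion
  have hpt : ∀ x ∈ Ioi (0:ℝ), x ^ r * f x = ∑' k : ℕ, F k x := by
    intro x hx
    have hx0 : (0:ℝ) < x := hx
    have hxb : (x / β) ^ α = β ^ (-α) * x ^ α := by
      rw [Real.div_rpow hx0.le hβ.le, Real.rpow_neg hβ.le]; ring
    rw [hf x, hxb]
    set t : ℝ := β ^ (-α) * x ^ α with ht
    have hterm2 : ∀ k : ℕ, F k x
        = (C * Real.exp (-l) * x ^ (r + α - 1) * Real.exp (-t)) *
          ((l * Real.exp (-t)) ^ k / (Nat.factorial k : ℝ)) := by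
      intro k
      have h1 : (Real.exp (-t)) ^ k = Real.exp ((k:ℝ) * (-t)) := (Real.exp_nat_mul _ k).symm
      rw [hF]
      simp only []
      rw [mul_pow, h1, show -(((k:ℝ) + 1) * β ^ (-α)) * x ^ α = (-t) + (k:ℝ) * (-t) by
        rw [ht]; ring]
      rw [Real.exp_add]
      ring
    have hRHS : ∑' k : ℕ, F k x
        = (C * Real.exp (-l) * x ^ (r + α - 1) * Real.exp (-t)) *
          Real.exp (l * Real.exp (-t)) := by
      rw [tsum_congr hterm2, tsum_mul_left, ← hexpser]
    rw [hRHS]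
    have hxr : x ^ r * x ^ (α - 1) = x ^ (r + α - 1) := by
      rw [← Real.rpow_add hx0, show r + (α - 1) = r + α - 1 by ring]
    have hexp3 : Real.exp (-(l * (1 - Real.exp (-t))) - t)
        = Real.exp (-l) * Real.exp (l * Real.exp (-t)) * Real.exp (-t) := by
      rw [← Real.exp_add, ← Real.exp_add]; congr 1; ring
    rw [hexp3]
    linear_combination (C * Real.exp (-l) * Real.exp (l * Real.exp (-t)) * Real.exp (-t)) * hxr
  -- nonvanishing denominators
  have hE1 : (1:ℝ) - Real.exp (-l) ≠ 0 := by
    intro h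
    have : Real.exp (-l) = 1 := by linarith [sub_eq_zero.mp h]
    exact hl (neg_eq_zero.mp ((Real.exp_eq_one_iff _).mp this))
  have hE2 : Real.exp l - 1 ≠ 0 := by
    intro h
    exact hl ((Real.exp_eq_one_iff l).mp (by linarith [sub_eq_zero.mp h]))
  -- final computation
  calc ∫ x in Ioi (0:ℝ), x ^ r * f x
      = ∫ x in Ioi (0:ℝ), ∑' k : ℕ, F k x :=
        setIntegral_congr_fun measurableSet_Ioi hpt
    _ = ∑' k : ℕ, ∫ x in Ioi (0:ℝ), F k x :=
        (integral_tsum_of_summable_integral_norm hFint hFsum).symm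
    _ = ∑' k : ℕ, (l * β ^ r * Real.Gamma (r / α + 1) / (Real.exp l - 1)) *
          (l ^ k / ((Nat.factorial k : ℝ) * ((k:ℝ) + 1) ^ (r / α + 1))) := by
        refine tsum_congr (fun k => ?_)
        rw [hF]
        simp only []
        rw [integral_const_mul, hIk k]
        have hk0 : (0:ℝ) < (k:ℝ) + 1 := by positivity
        have hks : (0:ℝ) < ((k:ℝ) + 1) ^ (r / α + 1) := Real.rpow_pos_of_pos hk0 _
        have hfac : (0:ℝ) < (Nat.factorial k : ℝ) := by positivity
        have hbr : β ^ (-α) * β ^ (r + α) = β ^ r := by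
          rw [← Real.rpow_add hβ]; ring_nf
        have hneg : ((k:ℝ) + 1) ^ (-(r / α + 1)) = (((k:ℝ) + 1) ^ (r / α + 1))⁻¹ := by
          rw [Real.rpow_neg hk0.le]
        have hexpinv : Real.exp (-l) = (Real.exp l)⁻¹ := Real.exp_neg l
        rw [hC, hneg, hexpinv, ← hbr]
        have hEpos : (0:ℝ) < Real.exp l := Real.exp_pos l
        rw [hexpinv] at hE1
        field_simp
    _ = l * β ^ r * Real.Gamma (r / α + 1) / (Real.exp l - 1) *
          ∑' k : ℕ, l ^ k / ((Nat.factorial k : ℝ) * ((k:ℝ) + 1) ^ (r / α + 1)) :=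
        tsum_mul_left
end

section
/- Let n ≥ 1 and 1 ≤ i ≤ n be integers and λ ≠ 0. Then for every t ∈ [0,1], λ e^{−λt} (1 − e^{−λt})^{i−1} (e^{−λt} − e^{−λ})^{n−i} = Σ_{j=0}^{i−1} Σ_{k=0}^{n−i} (−1)^{n+j−k−i} C(i−1, j) C(n−i, k) e^{−λ(n−k−i)} · λ e^{−λ(j+k+1)t}. Consequently, substituting t = G(x;θ), the density of the i-th order statistic of a sample of size n from an exp-G(λ, θ) distribution is a finite linear combination, with coefficients (−1)^{n+j−k−i} C(i−1,j) C(n−i,k) e^{−λ(n−k−i)} (1 − e^{−λ(j+k+1)})/((j+k+1) B(i, n−i+1) (1 − e^{−λ})^n), of exp-G densities with parameters (λ(j+k+1), θ). -/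
open Real Set Finset

lemma expG_key_s19 (n i : ℕ) (hi : 1 ≤ i) (hin : i ≤ n) (l t : ℝ) :
      l * Real.exp (-(l * t)) * (1 - Real.exp (-(l * t))) ^ (i - 1) *
          (Real.exp (-(l * t)) - Real.exp (-l)) ^ (n - i)
        = ∑ j ∈ Finset.range i, ∑ k ∈ Finset.range (n - i + 1),
            (-1 : ℝ) ^ (n + j - k - i) * (Nat.choose (i - 1) j : ℝ) *
              (Nat.choose (n - i) k : ℝ) * Real.exp (-(l * ((n : ℝ) - k - i))) *
              (l * Real.exp (-(l * ((j : ℝ) + k + 1) * t))) := by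
  set E := Real.exp (-(l * t)) with hE
  set F := Real.exp (-l) with hF
  have h1 : (1 - E) ^ (i - 1)
      = ∑ j ∈ Finset.range i, (-E) ^ j * ((i-1).choose j : ℝ) := by
    have : (1 : ℝ) - E = -E + 1 := by ring
    rw [this, add_pow]
    have hii : i - 1 + 1 = i := by omega
    rw [hii]
    exact Finset.sum_congr rfl fun j hj => by rw [one_pow, mul_one]
  have h2 : (E - F) ^ (n - i)
      = ∑ k ∈ Finset.range (n - i + 1), E ^ k * (-F) ^ (n - i - k) * ((n-i).choose k : ℝ) := by
    have : E - F = E + (-F) := by ring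
    rw [this, add_pow]
  rw [h1, h2, mul_assoc, Finset.sum_mul_sum]
  rw [Finset.mul_sum]
  refine Finset.sum_congr rfl fun j hj => ?_
  rw [Finset.mul_sum]
  refine Finset.sum_congr rfl fun k hk => ?_
  simp only [Finset.mem_range] at hj hk
  have hk' : k ≤ n - i := by omega
  have e1 : n + j - k - i = j + (n - i - k) := by omega
  have e2 : (n : ℝ) - k - i = ((n - i - k : ℕ) : ℝ) := by
    rw [Nat.sub_sub, Nat.cast_sub (by omega)]
    push_cast; ring
  have e3 : Real.exp (-(l * ((n : ℝ) - k - i))) = F ^ (n - i - k) := by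
    rw [e2, hF, ← Real.exp_nat_mul]; ring_nf
  have e4 : Real.exp (-(l * ((j : ℝ) + k + 1) * t)) = E ^ (j + k + 1) := by
    rw [hE, ← Real.exp_nat_mul]
    push_cast; ring_nf
  rw [e1, e3, e4, pow_add, neg_pow E j, neg_pow F (n - i - k), pow_add, pow_add]
  ring

/-- For integers `1 ≤ i ≤ n` and `λ ≠ 0`, the algebraic identity
`λ e^{−λt}(1 − e^{−λt})^{i−1}(e^{−λt} − e^{−λ})^{n−i}
  = Σ_{j<i} Σ_{k≤n−i} (−1)^{n+j−k−i} C(i−1,j) C(n−i,k) e^{−λ(n−k−i)} λ e^{−λ(j+k+1)t}`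
holds for all `t ∈ [0,1]`; consequently (substituting `t = G(x)`), the density of the
`i`-th order statistic of a sample of size `n` from an exp-G(λ) distribution is the
corresponding finite linear combination of exp-G densities with parameters `λ(j+k+1)`. -/
theorem expG_orderStatistic_expansion (n i : ℕ) (hi : 1 ≤ i) (hin : i ≤ n)
    (l : ℝ) (hl : l ≠ 0) :
    (∀ t ∈ Icc (0:ℝ) 1,
      l * Real.exp (-(l * t)) * (1 - Real.exp (-(l * t))) ^ (i - 1) *
          (Real.exp (-(l * t)) - Real.exp (-l)) ^ (n - i)
        = ∑ j ∈ Finset.range i, ∑ k ∈ Finset.range (n - i + 1),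
            (-1 : ℝ) ^ (n + j - k - i) * (Nat.choose (i - 1) j : ℝ) *
              (Nat.choose (n - i) k : ℝ) * Real.exp (-(l * ((n : ℝ) - k - i))) *
              (l * Real.exp (-(l * ((j : ℝ) + k + 1) * t)))) ∧
    (∀ g G : ℝ → ℝ, (∀ x, G x ∈ Icc (0:ℝ) 1) →
      ∀ x : ℝ,
        (l / (1 - Real.exp (-l)) * g x * Real.exp (-(l * G x))) *
            ((1 - Real.exp (-(l * G x))) / (1 - Real.exp (-l))) ^ (i - 1) *
            (1 - (1 - Real.exp (-(l * G x))) / (1 - Real.exp (-l))) ^ (n - i) /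
            ((Nat.factorial (i - 1) : ℝ) * (Nat.factorial (n - i) : ℝ) /
              (Nat.factorial n : ℝ))
          = ∑ j ∈ Finset.range i, ∑ k ∈ Finset.range (n - i + 1),
              (-1 : ℝ) ^ (n + j - k - i) * (Nat.choose (i - 1) j : ℝ) *
                (Nat.choose (n - i) k : ℝ) * Real.exp (-(l * ((n : ℝ) - k - i))) *
                (1 - Real.exp (-(l * ((j : ℝ) + k + 1)))) /
                (((j : ℝ) + k + 1) *
                  ((Nat.factorial (i - 1) : ℝ) * (Nat.factorial (n - i) : ℝ) /
                    (Nat.factorial n : ℝ)) *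
                  (1 - Real.exp (-l)) ^ n) *
                (l * ((j : ℝ) + k + 1) / (1 - Real.exp (-(l * ((j : ℝ) + k + 1)))) *
                  g x * Real.exp (-(l * ((j : ℝ) + k + 1) * G x)))) := by
  constructor
  · intro t _
    exact expG_key_s19 n i hi hin l t
  · intro g G hG x
    set B : ℝ := (Nat.factorial (i - 1) : ℝ) * (Nat.factorial (n - i) : ℝ) / (Nat.factorial n : ℝ) with hB
    have hBne : B ≠ 0 := by
      rw [hB]
      positivity
    have hb : (1 : ℝ) - Real.exp (-l) ≠ 0 := by
      intro h
      have : Real.exp (-l) = 1 := by linarith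
      rw [Real.exp_eq_one_iff] at this
      exact hl (by linarith)
    have hsimp : 1 - (1 - Real.exp (-(l * G x))) / (1 - Real.exp (-l))
        = (Real.exp (-(l * G x)) - Real.exp (-l)) / (1 - Real.exp (-l)) := by
      field_simp
      ring
    have key := expG_key_s19 n i hi hin l (G x)
    have hLHS :
        (l / (1 - Real.exp (-l)) * g x * Real.exp (-(l * G x))) *
          ((1 - Real.exp (-(l * G x))) / (1 - Real.exp (-l))) ^ (i - 1) *
          (1 - (1 - Real.exp (-(l * G x))) / (1 - Real.exp (-l))) ^ (n - i) / B
        = (l * Real.exp (-(l * G x)) * (1 - Real.exp (-(l * G x))) ^ (i - 1) *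
            (Real.exp (-(l * G x)) - Real.exp (-l)) ^ (n - i)) *
            (g x / ((1 - Real.exp (-l)) ^ n * B)) := by
      rw [hsimp, div_pow, div_pow]
      have hn : (1 - Real.exp (-l)) ^ n
          = (1 - Real.exp (-l)) * ((1 - Real.exp (-l)) ^ (i-1) * (1 - Real.exp (-l)) ^ (n-i)) := by
        rw [← pow_add, ← pow_succ']
        congr 1
        omega
      rw [hn]
      field_simp
    rw [hLHS, key, Finset.sum_mul]
    refine Finset.sum_congr rfl fun j hj => ?_
    rw [Finset.sum_mul]
    refine Finset.sum_congr rfl fun k hk => ?_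
    have hjk : ((j : ℝ) + k + 1) ≠ 0 := by positivity
    have hEjk : (1 : ℝ) - Real.exp (-(l * ((j : ℝ) + k + 1))) ≠ 0 := by
      intro h
      have h1 : Real.exp (-(l * ((j : ℝ) + k + 1))) = 1 := by linarith
      rw [Real.exp_eq_one_iff] at h1
      have : l * ((j : ℝ) + k + 1) = 0 := by linarith
      rcases mul_eq_zero.1 this with h2 | h2
      · exact hl h2
      · exact hjk h2
    field_simp
end
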